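/- arXiv:1912.06315 — 3 statements merged into one kernel-verified Lean document; each statement's English description precedes it below -/
import Mathlib

section
/- Let A be a finite alphabet, F a set of finite words over A, and X = X(A, F) the induced two-sided subshift. If there exist a real number c > 1/|A| and a positive integer k < |A| such that ∑_{v ∈ F} c^{|v|} < c·(|A| − k + 1) − 1, then h(X) ≥ log k. -/
open MeasureTheory Filter Set
open scoped ENNReal

namespace SlowForbidden

/-- The left shift map on the two-sided full shift over the alphabet `A`. -/
def shiftMap (A : Type*) : (ℤ → A) → (ℤ → A) := fun x n => x (n + 1)

/-- The word `w` occurs as a subword of the biinfinite sequence `x`. -/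
def OccursIn {A : Type*} (w : List A) (x : ℤ → A) : Prop :=
  ∃ n : ℤ, ∀ i : Fin w.length, x (n + (i : ℕ)) = w.get i

/-- `L_n(X)`: the set of words of length `n` occurring in points of `X`. -/
def lang {A : Type*} (X : Set (ℤ → A)) (n : ℕ) : Set (List A) :=
  {w | w.length = n ∧ ∃ x ∈ X, OccursIn w x}

/-- `L(X)`: the set of all (nonempty) words occurring in points of `X`. -/
def langAll {A : Type*} (X : Set (ℤ → A)) : Set (List A) :=
  {w | w ≠ [] ∧ ∃ x ∈ X, OccursIn w x}

/-- The cylinder set `[w] = {x : x_1 ⋯ x_n = w}`. -/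
def cyl {A : Type*} (w : List A) : Set (ℤ → A) :=
  {x | ∀ i : Fin w.length, x (1 + (i : ℕ)) = w.get i}

/-- `μ(W) = μ(⋃_{w ∈ W} [w])` for a collection `W` of words. -/
noncomputable def measOfWords {A : Type*} [MeasurableSpace A] (μ : Measure (ℤ → A))
    (W : Set (List A)) : ℝ≥0∞ :=
  μ (⋃ w ∈ W, cyl w)

/-- A set `S ⊆ ℕ` is syndetic if some bound `N` works for all gaps. -/
def Syndetic (S : Set ℕ) : Prop :=
  ∃ N : ℕ, 0 < N ∧ ∀ k : ℕ, ∃ m ∈ S, k ≤ m ∧ m < k + N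

/-- The topological entropy of `X` equals `h`:
`h = lim_n (1/n) log |L_n(X)|`. -/
def entropyIs {A : Type*} (X : Set (ℤ → A)) (h : ℝ) : Prop :=
  Tendsto (fun n : ℕ => Real.log ((lang X n).ncard : ℝ) / n) atTop (nhds h)

/-- The `n`-th entropy sum `∑_{w ∈ A^n} -μ([w]) log μ([w])`. -/
noncomputable def measEntropySum {A : Type*} [Fintype A] [MeasurableSpace A]
    (μ : Measure (ℤ → A)) (n : ℕ) : ℝ :=
  ∑ w : Fin n → A, Real.negMulLog (μ (cyl (List.ofFn w))).toReal

/-- The measure-theoretic entropy of `μ` equals `h`. -/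
def measEntropyIs {A : Type*} [Fintype A] [MeasurableSpace A]
    (μ : Measure (ℤ → A)) (h : ℝ) : Prop :=
  Tendsto (fun n : ℕ => measEntropySum μ n / n) atTop (nhds h)

/-- `μ` is invariant under the shift map. -/
def ShiftInvariant {A : Type*} [MeasurableSpace A] (μ : Measure (ℤ → A)) : Prop :=
  μ.map (shiftMap A) = μ

/-- `μ` is a measure of maximal entropy on `X`, where `h` is the topological
entropy of `X`: a shift-invariant Borel probability measure with `μ(X) = 1` and `h(μ) = h`. -/
def IsMME {A : Type*} [Fintype A] [MeasurableSpace A] (X : Set (ℤ → A)) (h : ℝ)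
    (μ : Measure (ℤ → A)) : Prop :=
  IsProbabilityMeasure μ ∧ ShiftInvariant μ ∧ μ X = 1 ∧ measEntropyIs μ h

/-- `μ` is ergodic for the shift: every invariant measurable set is trivial. -/
def IsErgodicShift {A : Type*} [MeasurableSpace A] (μ : Measure (ℤ → A)) : Prop :=
  ∀ s : Set (ℤ → A), MeasurableSet s → μ (symmDiff s (shiftMap A ⁻¹' s)) = 0 →
    μ s = 0 ∨ μ s = 1

/-- The subshift induced by the forbidden list `F`. -/
def XAF {A : Type*} (F : Set (List A)) : Set (ℤ → A) :=
  {x | ∀ w ∈ F, ¬ OccursIn w x}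

/-- `|F_n|`: the number of words of length `n` in `F`. -/
noncomputable def cardLen {A : Type*} (F : Set (List A)) (n : ℕ) : ℕ :=
  (F ∩ {w | w.length = n}).ncard

/-- Heavy subwords: subwords of some `w ∈ F` of length at least `|w|/3`. -/
def Heavy {A : Type*} (F : Set (List A)) : Set (List A) :=
  {u | ∃ w ∈ F, u <:+: w ∧ w.length ≤ 3 * u.length}

/-- Heavy′ subwords: subwords of some `w ∈ F` of length at least `|w|/4`. -/
def Heavy' {A : Type*} (F : Set (List A)) : Set (List A) :=
  {u | ∃ w ∈ F, u <:+: w ∧ w.length ≤ 4 * u.length}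

/-- `G`: words of `L(X)` with no heavy subword as a prefix or as a suffix. -/
def goodWords {A : Type*} (X : Set (ℤ → A)) (F : Set (List A)) : Set (List A) :=
  {w | w ∈ langAll X ∧ (∀ u ∈ Heavy F, ¬ u <+: w) ∧ (∀ u ∈ Heavy F, ¬ u <:+ w)}

/-- `G′`: words of `L(X)` with no heavy′ subword as a prefix or as a suffix. -/
def goodWords' {A : Type*} (X : Set (ℤ → A)) (F : Set (List A)) : Set (List A) :=
  {w | w ∈ langAll X ∧ (∀ u ∈ Heavy' F, ¬ u <+: w) ∧ (∀ u ∈ Heavy' F, ¬ u <:+ w)}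

/-- The Kolmogorov property for a shift-invariant measure `μ` on the full shift. -/
def HasKProperty {A : Type*} [MeasurableSpace A] (μ : Measure (ℤ → A)) : Prop :=
  ∃ K : MeasurableSpace (ℤ → A),
    K ≤ (inferInstance : MeasurableSpace (ℤ → A)) ∧
    K ≤ MeasurableSpace.map (shiftMap A) K ∧
    (∀ s : Set (ℤ → A), MeasurableSet s →
      ∃ t : Set (ℤ → A),
        MeasurableSet[⨆ n : ℕ, MeasurableSpace.map ((shiftMap A)^[n]) K] t ∧
        μ (symmDiff s t) = 0) ∧
    (∀ s : Set (ℤ → A),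
      (∀ n : ℕ, MeasurableSet[MeasurableSpace.map ((shiftMap A)^[n]) K] s) →
        μ s = 0 ∨ μ s = 1)



section Aux
set_option linter.unusedSectionVars false
open scoped Classical

variable {A : Type} [Fintype A] [Nonempty A]

/-- admissible: no forbidden infix -/
def Adm (F : Set (List A)) (u : List A) : Prop := ∀ w ∈ F, ¬ w <:+: u

lemma Adm.of_infix {F : Set (List A)} {u v : List A} (h : Adm F u) (hv : v <:+: u) :
    Adm F v := fun w hw hwv => h w hw (hwv.trans hv)

lemma adm_nil {F : Set (List A)} (hF : [] ∉ F) : Adm F ([] : List A) := by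
  intro w hw hwi
  have : w = [] := List.eq_nil_of_sublist_nil hwi.sublist
  exact hF (this ▸ hw)

lemma suffix_concat_iff {s u : List A} {b a : A} :
    s ++ [b] <:+ u ++ [a] ↔ s <:+ u ∧ b = a := by
  constructor
  · rintro ⟨w, hw⟩
    rw [← List.append_assoc] at hw
    obtain ⟨h1, h2⟩ := List.append_inj' hw (by simp)
    exact ⟨⟨w, h1⟩, by simpa using h2⟩
  · rintro ⟨⟨w, hw⟩, rfl⟩
    exact ⟨w, by rw [← List.append_assoc, hw]⟩

lemma infix_concat_iff {w u : List A} {a : A} :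
    w <:+: u ++ [a] ↔ w <:+: u ∨ w <:+ u ++ [a] := by
  constructor
  · rintro ⟨s, t, h⟩
    rcases List.eq_nil_or_concat t with rfl | ⟨t', b, rfl⟩
    · right; exact ⟨s, by simpa using h⟩
    · left
      rw [List.concat_eq_append, ← List.append_assoc] at h
      obtain ⟨h1, -⟩ := List.append_inj' h (by simp)
      exact ⟨s, t', by simpa using h1⟩
  · rintro (h | h)
    · exact h.trans ⟨[], [a], by simp⟩
    · exact h.isInfix

lemma adm_concat {F : Set (List A)} {u : List A} {a : A} (hu : Adm F u)
    (h : ∀ w ∈ F, ¬ w <:+ u ++ [a]) : Adm F (u ++ [a]) := by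
  intro w hw hwi
  rcases infix_concat_iff.mp hwi with h' | h'
  · exact hu w hw h'
  · exact h w hw h'

noncomputable def pv (x : ℝ≥0∞) (u v : List A) : ℝ≥0∞ :=
  ∑ i ∈ Finset.range v.length, if v.take i <:+ u then x ^ (v.length - i) else 0

noncomputable def qv (x : ℝ≥0∞) (d a : A) (u v : List A) : ℝ≥0∞ :=
  ∑ j ∈ Finset.range (v.length - 1),
    if (v.take j <:+ u ∧ v.getD j d = a) then x ^ (v.length - 1 - j) else 0

noncomputable def fv (x : ℝ≥0∞) (u v : List A) : ℝ≥0∞ :=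
  if v.take (v.length - 1) <:+ u then x else 0

lemma take_succ_getD (v : List A) (d : A) {j : ℕ} (hj : j < v.length) :
    v.take (j+1) = v.take j ++ [v.getD j d] := by
  rw [List.take_succ, List.getElem?_eq_getElem hj, List.getD_eq_getElem v d hj]
  rfl

lemma pv_eq (x : ℝ≥0∞) (d : A) (u v : List A) (hv : v ≠ []) :
    pv x u v = x * ∑ a : A, qv x d a u v + fv x u v := by
  have hn : v.length - 1 + 1 = v.length := Nat.succ_pred_eq_of_pos (List.length_pos_iff.mpr hv)
  have h1 : ∑ a : A, qv x d a u v =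
      ∑ j ∈ Finset.range (v.length - 1),
        if v.take j <:+ u then x ^ (v.length - 1 - j) else 0 := by
    unfold qv
    rw [Finset.sum_comm]
    refine Finset.sum_congr rfl fun j hj => ?_
    by_cases hC : v.take j <:+ u
    · simp [hC, Finset.sum_ite_eq]
    · simp [hC]
  rw [h1]
  unfold pv fv
  rw [← hn, Finset.sum_range_succ, Finset.mul_sum]
  congr 1
  · refine Finset.sum_congr rfl fun j hj => ?_
    rw [Finset.mem_range] at hj
    by_cases hC : v.take j <:+ u
    · simp only [hC, if_true]
      rw [← pow_succ']
      congr 1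
      omega
    · simp [hC]
  · rw [show v.length - 1 + 1 - 1 = v.length - 1 from by omega,
      show v.length - 1 + 1 - (v.length - 1) = 1 from by omega, pow_one]

lemma pv_concat (x : ℝ≥0∞) (d : A) (u v : List A) (a : A) (hv : v ≠ []) :
    pv x (u ++ [a]) v = x ^ v.length + qv x d a u v := by
  have hn : v.length - 1 + 1 = v.length := Nat.succ_pred_eq_of_pos (List.length_pos_iff.mpr hv)
  unfold pv
  conv_lhs => rw [← hn]
  rw [Finset.sum_range_succ']
  have h0 : (if v.take 0 <:+ u ++ [a] then x ^ (v.length - 1 + 1 - 0) else 0) = x ^ v.length := by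
    simp [hn]
  rw [h0, add_comm]
  congr 1
  unfold qv
  refine Finset.sum_congr rfl fun j hj => ?_
  rw [Finset.mem_range] at hj
  rw [take_succ_getD v d (by omega),
    show v.length - 1 + 1 - (j+1) = v.length - 1 - j from by omega]
  simp only [suffix_concat_iff]

lemma pv_nil (x : ℝ≥0∞) (v : List A) (hv : v ≠ []) :
    pv x ([] : List A) v = x ^ v.length := by
  unfold pv
  rw [Finset.sum_eq_single 0]
  · simp
  · intro i hi hine
    rw [Finset.mem_range] at hi
    have hlen : (v.take i).length = i := by
      rw [List.length_take]; omega
    have hne : v.take i ≠ [] := by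
      intro h; rw [h] at hlen; simp at hlen; omega
    simp [List.suffix_nil, hne]
  · intro h
    simp at h
    exact absurd h hv


noncomputable def Pot (F : Set (List A)) (x : ℝ≥0∞) (u : List A) : ℝ≥0∞ :=
  ∑' v : F, pv x u (v : List A)

noncomputable def Sinf (F : Set (List A)) (x : ℝ≥0∞) : ℝ≥0∞ :=
  ∑' v : F, x ^ (v : List A).length

lemma mem_F_ne_nil {F : Set (List A)} (hF : [] ∉ F) (v : F) : (v : List A) ≠ [] :=
  fun h => hF (h ▸ v.2)

lemma Pot_nil {F : Set (List A)} (hF : [] ∉ F) (x : ℝ≥0∞) :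
    Pot F x [] = Sinf F x :=
  tsum_congr fun v => pv_nil x (v : List A) (mem_F_ne_nil hF v)

lemma Pot_eq {F : Set (List A)} (hF : [] ∉ F) (x : ℝ≥0∞) (d : A) (u : List A) :
    Pot F x u = x * (∑ a : A, ∑' v : F, qv x d a u (v : List A)) + ∑' v : F, fv x u (v : List A) := by
  unfold Pot
  have h1 : ∀ v : F, pv x u (v : List A)
      = x * ∑ a : A, qv x d a u (v : List A) + fv x u (v : List A) :=
    fun v => pv_eq x d u v (mem_F_ne_nil hF v)
  rw [tsum_congr h1, ENNReal.tsum_add, ENNReal.tsum_mul_left,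
    Summable.tsum_finsetSum (fun a _ => ENNReal.summable)]

lemma Pot_concat {F : Set (List A)} (hF : [] ∉ F) (x : ℝ≥0∞) (d : A) (u : List A) (a : A) :
    Pot F x (u ++ [a]) = Sinf F x + ∑' v : F, qv x d a u (v : List A) := by
  unfold Pot Sinf
  have h1 : ∀ v : F, pv x (u ++ [a]) (v : List A)
      = x ^ (v : List A).length + qv x d a u (v : List A) :=
    fun v => pv_concat x d u v a (mem_F_ne_nil hF v)
  rw [tsum_congr h1, ENNReal.tsum_add]

lemma extension_step {F : Set (List A)} (hF : [] ∉ F) (x : ℝ≥0∞) (hx0 : x ≠ 0) (hxt : x ≠ ⊤)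
    (k : ℕ) (hkA : k ≤ Fintype.card A)
    (hbound : Sinf F x + 1 < x * ((Fintype.card A - k + 1 : ℕ) : ℝ≥0∞))
    (u : List A) (hu : Adm F u) (hP : Pot F x u ≤ Sinf F x + 1) :
    ∃ s : Finset A, k ≤ s.card ∧ ∀ a ∈ s, Adm F (u ++ [a]) ∧ Pot F x (u ++ [a]) ≤ Sinf F x + 1 := by
  set d : A := Classical.arbitrary A with hd
  set Q : A → ℝ≥0∞ := fun a => ∑' v : F, qv x d a u (v : List A) with hQ
  set Φ : ℝ≥0∞ := ∑' v : F, fv x u (v : List A) with hΦ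
  set Fired : Finset A := Finset.univ.filter (fun a => ¬ Adm F (u ++ [a])) with hFired
  set Over : Finset A := Finset.univ.filter (fun a => 1 < Q a) with hOver
  -- fired letters
  have key : ∀ a ∈ Fired, ∃ v : F, fv x u (v : List A) = x ∧ (v : List A).getLast? = some a := by
    intro a ha
    rw [hFired, Finset.mem_filter] at ha
    have : ∃ w ∈ F, w <:+ u ++ [a] := by
      by_contra hcon
      push_neg at hcon
      exact ha.2 (adm_concat hu hcon)
    obtain ⟨w, hwF, hws⟩ := this
    have hwne : w ≠ [] := fun h => hF (h ▸ hwF)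
    have hdecomp : w.take (w.length - 1) ++ [w.getLast hwne] = w := by
      rw [← List.dropLast_eq_take]
      exact List.dropLast_append_getLast hwne
    rw [← hdecomp] at hws
    obtain ⟨hws1, hws2⟩ := suffix_concat_iff.mp hws
    refine ⟨⟨w, hwF⟩, ?_, ?_⟩
    · unfold fv
      simp [hws1]
    · show w.getLast? = some a
      rw [List.getLast?_eq_getLast hwne, hws2]
  choose g hg1 hg2 using key
  have hfired : x * Fired.card ≤ Φ := by
    classical
    set T : Finset F := Fired.attach.image (fun a => g a.1 a.2) with hT
    have hTcard : T.card = Fired.card := by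
      rw [hT, Finset.card_image_of_injective _ ?_, Finset.card_attach]
      intro a b hab
      have := congrArg (fun v : F => (v : List A).getLast?) hab
      simp only [hg2] at this
      exact Subtype.ext (Option.some_injective _ this)
    have h2 : ∑ v ∈ T, fv x u (v : List A) = T.card * x := by
      rw [Finset.sum_congr rfl (fun v hv => ?_), Finset.sum_const, nsmul_eq_mul]
      rw [hT, Finset.mem_image] at hv
      obtain ⟨a, _, rfl⟩ := hv
      exact hg1 _ _
    calc x * Fired.card = T.card * x := by rw [hTcard, mul_comm]
    _ = ∑ v ∈ T, fv x u (v : List A) := h2.symm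
    _ ≤ Φ := ENNReal.sum_le_tsum T
  have hover : x * Over.card + Φ ≤ Sinf F x + 1 := by
    have h3 : x * (Over.card : ℝ≥0∞) ≤ x * ∑ a : A, Q a := by
      rw [Finset.card_eq_sum_ones, Nat.cast_sum, Finset.mul_sum, Finset.mul_sum]
      refine le_trans (Finset.sum_le_sum (fun a ha => ?_)) (Finset.sum_le_sum_of_subset (Finset.subset_univ Over))
      rw [hOver, Finset.mem_filter] at ha
      calc x * (1:ℕ) = x * 1 := by norm_num
      _ ≤ x * Q a := mul_le_mul_right ha.2.le x
    calc x * Over.card + Φ ≤ x * ∑ a : A, Q a + Φ := add_le_add_left h3 Φ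
    _ = Pot F x u := (Pot_eq hF x d u).symm
    _ ≤ Sinf F x + 1 := hP
  -- combine
  have hbadcard : x * ((Fired ∪ Over).card : ℝ≥0∞) < x * ((Fintype.card A - k + 1 : ℕ) : ℝ≥0∞) := by
    have h4 : ((Fired ∪ Over).card : ℝ≥0∞) ≤ (Fired.card : ℝ≥0∞) + Over.card := by
      have := Finset.card_union_le Fired Over
      exact_mod_cast this
    calc x * ((Fired ∪ Over).card : ℝ≥0∞) ≤ x * ((Fired.card : ℝ≥0∞) + Over.card) :=
      mul_le_mul_right h4 x
    _ = x * Fired.card + x * Over.card := mul_add x _ _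
    _ ≤ Φ + x * Over.card := add_le_add_left hfired _
    _ = x * Over.card + Φ := add_comm _ _
    _ ≤ Sinf F x + 1 := hover
    _ < _ := hbound
  have hbad : (Fired ∪ Over).card ≤ Fintype.card A - k := by
    have := Nat.cast_lt.mp ((ENNReal.mul_lt_mul_iff_right hx0 hxt).mp hbadcard)
    omega
  refine ⟨Finset.univ \ (Fired ∪ Over), ?_, ?_⟩
  · rw [Finset.card_sdiff_of_subset (Finset.subset_univ _), Finset.card_univ]
    omega
  · intro a ha
    rw [Finset.mem_sdiff, Finset.mem_union, hFired, hOver, Finset.mem_filter, Finset.mem_filter] at ha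
    push_neg at ha
    obtain ⟨-, ha1, ha2⟩ := ha
    have hadm : Adm F (u ++ [a]) := ha1 (Finset.mem_univ a)
    refine ⟨hadm, ?_⟩
    rw [Pot_concat hF x d u a]
    exact add_le_add_right (ha2 (Finset.mem_univ a)) _


lemma tree_count {F : Set (List A)} (hF : [] ∉ F) (x : ℝ≥0∞) (hx0 : x ≠ 0) (hxt : x ≠ ⊤)
    (k : ℕ) (hkA : k ≤ Fintype.card A)
    (hbound : Sinf F x + 1 < x * ((Fintype.card A - k + 1 : ℕ) : ℝ≥0∞)) (n : ℕ) :
    ∃ W : Finset (List A),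
      (∀ u ∈ W, u.length = n ∧ Adm F u ∧ Pot F x u ≤ Sinf F x + 1) ∧ k ^ n ≤ W.card := by
  classical
  induction n with
  | zero =>
    refine ⟨{[]}, ?_, by simp⟩
    intro u hu
    rw [Finset.mem_singleton] at hu
    subst hu
    exact ⟨rfl, adm_nil hF, by rw [Pot_nil hF x]; exact le_self_add⟩
  | succ n ih =>
    obtain ⟨W, hW, hWc⟩ := ih
    have hstep : ∀ u : W, ∃ s : Finset A, k ≤ s.card ∧
        ∀ a ∈ s, Adm F (u.1 ++ [a]) ∧ Pot F x (u.1 ++ [a]) ≤ Sinf F x + 1 :=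
      fun u => extension_step hF x hx0 hxt k hkA hbound u.1 (hW u.1 u.2).2.1 (hW u.1 u.2).2.2
    choose s hs1 hs2 using hstep
    refine ⟨W.attach.biUnion (fun u => (s u).image (fun a => u.1 ++ [a])), ?_, ?_⟩
    · intro v hv
      rw [Finset.mem_biUnion] at hv
      obtain ⟨u, hu, hv⟩ := hv
      rw [Finset.mem_image] at hv
      obtain ⟨a, ha, rfl⟩ := hv
      obtain ⟨h1, h2⟩ := hs2 u a ha
      refine ⟨?_, h1, h2⟩
      rw [List.length_append, (hW u.1 u.2).1]
      simp
    · rw [Finset.card_biUnion]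
      · calc k ^ (n + 1) = k ^ n * k := by ring
        _ ≤ W.card * k := Nat.mul_le_mul_right k hWc
        _ = ∑ _u ∈ W.attach, k := by rw [Finset.sum_const, Finset.card_attach, smul_eq_mul, mul_comm]
        _ ≤ ∑ u ∈ W.attach, ((s u).image (fun a => u.1 ++ [a])).card := by
            refine Finset.sum_le_sum fun u _ => ?_
            rw [Finset.card_image_of_injective _ (fun a b hab => ?_)]
            · exact hs1 u
            · simpa using List.append_inj_right hab rfl
      · intro u _ v _ huv
        simp only [Finset.disjoint_left, Finset.mem_image]
        rintro w ⟨a, -, rfl⟩ ⟨b, -, hab⟩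
        obtain ⟨h1, h2⟩ := List.append_inj hab.symm
          (by rw [(hW u.1 u.2).1, (hW v.1 v.2).1])
        exact huv (Subtype.ext h1)

/-- all words of a given length, as a Finset -/
noncomputable def allWords (A : Type) [Fintype A] (m : ℕ) : Finset (List A) :=
  Finset.image (fun f : Fin m → A => List.ofFn f) Finset.univ

lemma mem_allWords {m : ℕ} {u : List A} : u ∈ allWords A m ↔ u.length = m := by
  unfold allWords
  rw [Finset.mem_image]
  constructor
  · rintro ⟨f, -, rfl⟩; simp
  · rintro rfl
    exact ⟨fun i => u.get i, Finset.mem_univ _, (List.ofFn_get u)⟩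

lemma allWords_card_le (m : ℕ) : (allWords A m).card ≤ Fintype.card A ^ m := by
  calc (allWords A m).card ≤ (Finset.univ : Finset (Fin m → A)).card := Finset.card_image_le
  _ = Fintype.card A ^ m := by rw [Finset.card_univ, Fintype.card_fun, Fintype.card_fin]

/-- u is (t,t)-biextendable admissibly -/
def Biext (F : Set (List A)) (t : ℕ) (u : List A) : Prop :=
  ∃ L R : List A, L.length = t ∧ R.length = t ∧ Adm F (L ++ u ++ R)

noncomputable def BFin (F : Set (List A)) (m t : ℕ) : Finset (List A) :=
  (allWords A m).filter (fun u => Biext F t u)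

lemma prefix_append_left {c s w : List A} (h : s <+: w) : c ++ s <+: c ++ w := by
  obtain ⟨r, rfl⟩ := h
  exact ⟨r, by rw [List.append_assoc]⟩

lemma biext_mono {F : Set (List A)} {t t' : ℕ} (h : t' ≤ t) {u : List A}
    (hb : Biext F t u) : Biext F t' u := by
  obtain ⟨L, R, hL, hR, hadm⟩ := hb
  refine ⟨L.drop (t - t'), R.take t', by simp [hL]; omega, by simp [hR]; omega, ?_⟩
  have hpre : L ++ u ++ R.take t' <+: L ++ u ++ R := by
    rw [List.append_assoc, List.append_assoc]
    exact prefix_append_left (prefix_append_left (R.take_prefix t'))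
  have hdrop : (L ++ u ++ R.take t').drop (t - t') = L.drop (t - t') ++ u ++ R.take t' := by
    rw [List.append_assoc, List.drop_append, show t - t' - L.length = 0 by omega,
      List.drop_zero, List.append_assoc]
  refine hadm.of_infix ?_
  rw [← hdrop]
  exact (List.drop_suffix _ _).isInfix.trans hpre.isInfix

lemma bfin_mono {F : Set (List A)} {t t' : ℕ} (h : t' ≤ t) (m : ℕ) :
    BFin F m t ⊆ BFin F m t' := by
  intro u hu
  rw [BFin, Finset.mem_filter] at *
  exact ⟨hu.1, biext_mono h hu.2⟩


lemma recon (u : List A) (t m : ℕ) :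
    u.take t ++ ((u.drop t).take m ++ u.drop (t + m)) = u := by
  have h1 : (u.drop t).drop m = u.drop (t + m) := List.drop_drop
  rw [← h1, List.take_append_drop, List.take_append_drop]

lemma count_key {F : Set (List A)} (hF : [] ∉ F) (x : ℝ≥0∞) (hx0 : x ≠ 0) (hxt : x ≠ ⊤)
    (k : ℕ) (hkA : k ≤ Fintype.card A)
    (hbound : Sinf F x + 1 < x * ((Fintype.card A - k + 1 : ℕ) : ℝ≥0∞)) (m t : ℕ) :
    k ^ (m + 2 * t) ≤ Fintype.card A ^ (2 * t) * (BFin F m t).card := by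
  classical
  obtain ⟨W, hW, hWc⟩ := tree_count hF x hx0 hxt k hkA hbound (t + m + t)
  have hmem : ∀ u ∈ W, (u.take t, ((u.drop t).take m, u.drop (t + m))) ∈
      (allWords A t) ×ˢ ((BFin F m t) ×ˢ (allWords A t)) := by
    intro u hu
    obtain ⟨hlen, hadm, -⟩ := hW u hu
    rw [Finset.mem_product, Finset.mem_product]
    refine ⟨?_, ⟨?_, ?_⟩⟩
    · rw [mem_allWords, List.length_take, hlen]; omega
    · rw [BFin, Finset.mem_filter, mem_allWords]
      constructor
      · rw [List.length_take, List.length_drop, hlen]; omega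
      · refine ⟨u.take t, u.drop (t + m), by rw [List.length_take, hlen]; omega,
          by rw [List.length_drop, hlen]; omega, ?_⟩
        rw [List.append_assoc, recon]
        exact hadm
    · rw [mem_allWords, List.length_drop, hlen]; omega
  have hinj : Set.InjOn (fun u : List A => (u.take t, ((u.drop t).take m, u.drop (t + m)))) ↑W := by
    intro u hu v hv h
    simp only [Prod.mk.injEq] at h
    obtain ⟨h1, h2, h3⟩ := h
    rw [← recon u t m, ← recon v t m, h1, h2, h3]
  have hcard := Finset.card_le_card_of_injOn _ hmem hinj
  rw [Finset.card_product, Finset.card_product] at hcard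
  calc k ^ (m + 2 * t) = k ^ (t + m + t) := by ring_nf
  _ ≤ W.card := hWc
  _ ≤ (allWords A t).card * ((BFin F m t).card * (allWords A t).card) := hcard
  _ ≤ Fintype.card A ^ t * ((BFin F m t).card * Fintype.card A ^ t) := by
      exact Nat.mul_le_mul (allWords_card_le t)
        (Nat.mul_le_mul_left _ (allWords_card_le t))
  _ = Fintype.card A ^ (2 * t) * (BFin F m t).card := by ring

lemma bfin_submult {F : Set (List A)} (m1 m2 t : ℕ) :
    (BFin F (m1 + m2) t).card ≤ (BFin F m1 t).card * (BFin F m2 t).card := by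
  classical
  have hmem : ∀ u ∈ BFin F (m1 + m2) t, (u.take m1, u.drop m1) ∈
      (BFin F m1 t) ×ˢ (BFin F m2 t) := by
    intro u hu
    rw [BFin, Finset.mem_filter, mem_allWords] at hu
    obtain ⟨hlen, L, R, hL, hR, hadm⟩ := hu
    rw [Finset.mem_product, BFin, BFin, Finset.mem_filter, Finset.mem_filter,
      mem_allWords, mem_allWords]
    dsimp only
    have hid : L ++ u.take m1 ++ (u.drop m1 ++ R) = L ++ u ++ R := by
      rw [List.append_assoc, List.append_assoc, ← List.append_assoc (u.take m1),
        List.take_append_drop]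
    refine ⟨⟨by rw [List.length_take]; omega, ?_⟩, ⟨by rw [List.length_drop]; omega, ?_⟩⟩
    · refine ⟨L, (u.drop m1 ++ R).take t, hL, ?_, ?_⟩
      · rw [List.length_take, List.length_append, List.length_drop]; omega
      · refine hadm.of_infix ?_
        rw [← hid]
        refine List.IsPrefix.isInfix ?_
        rw [List.append_assoc, List.append_assoc]
        exact prefix_append_left (prefix_append_left (List.take_prefix _ _))
    · refine ⟨(L ++ u.take m1).drop m1, R, ?_, hR, ?_⟩
      · rw [List.length_drop, List.length_append, List.length_take]; omega
      · refine hadm.of_infix ?_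
        rw [← hid]
        have hdrop : (L ++ u.take m1 ++ (u.drop m1 ++ R)).drop m1
            = (L ++ u.take m1).drop m1 ++ (u.drop m1 ++ R) :=
          List.drop_append_of_le_length
            (by rw [List.length_append, List.length_take]; omega)
        rw [List.append_assoc, ← hdrop]
        exact (List.drop_suffix _ _).isInfix
  have hinj : Set.InjOn (fun u : List A => (u.take m1, u.drop m1)) ↑(BFin F (m1 + m2) t) := by
    intro u hu v hv h
    simp only [Prod.mk.injEq] at h
    rw [← List.take_append_drop m1 u, ← List.take_append_drop m1 v, h.1, h.2]
  have := Finset.card_le_card_of_injOn _ hmem hinj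
  rwa [Finset.card_product] at this

lemma nat_growth (A0 b : ℕ) (hb : 1 ≤ b) : ∃ R, A0 * b ^ R < (b + 1) ^ R := by
  refine ⟨A0 * b, ?_⟩
  have key : ∀ R : ℕ, b ^ (R + 1) + R * b ^ R ≤ (b + 1) ^ R * b := by
    intro R
    induction R with
    | zero => simp
    | succ R ih =>
      calc b ^ (R + 1 + 1) + (R + 1) * b ^ (R + 1)
          = b ^ (R + 2) + R * b ^ (R + 1) + b ^ (R + 1) := by ring
        _ ≤ b ^ (R + 2) + R * b ^ (R + 1) + b ^ (R + 1) + R * b ^ R := Nat.le_add_right _ _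
        _ = (b + 1) * (b ^ (R + 1) + R * b ^ R) := by ring
        _ ≤ (b + 1) * ((b + 1) ^ R * b) := Nat.mul_le_mul_left _ ih
        _ = (b + 1) ^ (R + 1) * b := by ring
  have h2 := key (A0 * b)
  have hbR : 0 < b ^ (A0 * b + 1) := Nat.pow_pos hb
  have hmain : A0 * b ^ (A0 * b) * b < (b + 1) ^ (A0 * b) * b := by
    calc A0 * b ^ (A0 * b) * b = A0 * b * b ^ (A0 * b) := by ring
    _ < b ^ (A0 * b + 1) + A0 * b * b ^ (A0 * b) := Nat.lt_add_of_pos_left hbR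
    _ ≤ (b + 1) ^ (A0 * b) * b := h2
  exact Nat.lt_of_mul_lt_mul_right hmain

lemma bfin_lower {F : Set (List A)} (hF : [] ∉ F) (x : ℝ≥0∞) (hx0 : x ≠ 0) (hxt : x ≠ ⊤)
    (k : ℕ) (hk : 1 ≤ k) (hkA : k ≤ Fintype.card A)
    (hbound : Sinf F x + 1 < x * ((Fintype.card A - k + 1 : ℕ) : ℝ≥0∞)) (m t : ℕ) :
    k ^ m ≤ (BFin F m t).card := by
  by_contra hcon
  push_neg at hcon
  set b := (BFin F m t).card with hb
  have hpow : ∀ R : ℕ, (BFin F (m * R) t).card ≤ b ^ R := by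
    intro R
    induction R with
    | zero =>
      rw [Nat.mul_zero, pow_zero]
      calc (BFin F 0 t).card ≤ (allWords A 0).card :=
        Finset.card_le_card (Finset.filter_subset _ _)
      _ ≤ Fintype.card A ^ 0 := allWords_card_le 0
      _ = 1 := pow_zero _
    | succ R ih =>
      calc (BFin F (m * (R + 1)) t).card = (BFin F (m + m * R) t).card := by ring_nf
      _ ≤ (BFin F m t).card * (BFin F (m * R) t).card := bfin_submult m (m * R) t
      _ ≤ b * b ^ R := Nat.mul_le_mul_left _ ih
      _ = b ^ (R + 1) := by ring
  have hchain : ∀ R : ℕ, k ^ (m * R) ≤ Fintype.card A ^ (2 * t) * b ^ R := by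
    intro R
    calc k ^ (m * R) ≤ k ^ (m * R + 2 * t) := Nat.pow_le_pow_right hk (Nat.le_add_right _ _)
    _ ≤ Fintype.card A ^ (2 * t) * (BFin F (m * R) t).card :=
        count_key hF x hx0 hxt k hkA hbound (m * R) t
    _ ≤ Fintype.card A ^ (2 * t) * b ^ R := Nat.mul_le_mul_left _ (hpow R)
  rcases Nat.eq_zero_or_pos b with hb0 | hb1
  · have := hchain 1
    rw [hb0] at this
    simp at this
    have : 0 < k ^ (m * 1) := Nat.pow_pos hk
    omega
  · obtain ⟨R, hR⟩ := nat_growth (Fintype.card A ^ (2 * t)) b hb1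
    have h1 : (b + 1) ^ R ≤ (k ^ m) ^ R := Nat.pow_le_pow_left (by omega) R
    rw [← pow_mul, mul_comm m R, mul_comm R m] at h1
    have := hchain R
    omega

lemma lfin_lower {F : Set (List A)} (hF : [] ∉ F) (x : ℝ≥0∞) (hx0 : x ≠ 0) (hxt : x ≠ ⊤)
    (k : ℕ) (hk : 1 ≤ k) (hkA : k ≤ Fintype.card A)
    (hbound : Sinf F x + 1 < x * ((Fintype.card A - k + 1 : ℕ) : ℝ≥0∞)) (m : ℕ) :
    k ^ m ≤ ((allWords A m).filter (fun u => ∀ t, Biext F t u)).card := by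
  classical
  set f : ℕ → ℕ := fun t => (BFin F m t).card with hf
  have hrange : (Set.range f).Nonempty := ⟨f 0, 0, rfl⟩
  obtain ⟨T, hT⟩ := Nat.sInf_mem hrange
  have hTle : ∀ t, f T ≤ f t := by
    intro t
    rw [hT]
    exact Nat.sInf_le ⟨t, rfl⟩
  have heq : ∀ t, T ≤ t → BFin F m t = BFin F m T := fun t ht =>
    Finset.eq_of_subset_of_card_le (bfin_mono ht m) (hTle t)
  have hset : (allWords A m).filter (fun u => ∀ t, Biext F t u) = BFin F m T := by
    ext u
    rw [Finset.mem_filter, BFin, Finset.mem_filter]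
    constructor
    · rintro ⟨h1, h2⟩; exact ⟨h1, h2 T⟩
    · rintro ⟨h1, h2⟩
      refine ⟨h1, fun t => ?_⟩
      rcases le_total t T with h | h
      · exact biext_mono h h2
      · have := heq t h
        have hu : u ∈ BFin F m t := by
          rw [this, BFin, Finset.mem_filter]
          exact ⟨h1, h2⟩
        rw [BFin, Finset.mem_filter] at hu
        exact hu.2
  rw [hset]
  exact bfin_lower hF x hx0 hxt k hk hkA hbound m T


lemma exists_point {F : Set (List A)} {u : List A} (hu : ∀ t : ℕ, Biext F t u) :
    ∃ y : ℤ → A, y ∈ XAF F ∧ OccursIn u y := by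
  classical
  set d : A := Classical.arbitrary A with hd
  choose L R hL hR hadm using hu
  set W : ℕ → List A := fun t => L t ++ u ++ R t with hW
  have hWlen : ∀ t, (W t).length = t + u.length + t := by
    intro t
    rw [hW]
    simp only [List.length_append, hL, hR]
  set z : ℕ → ℤ → A := fun t i => (W t).getD (i + t).toNat d with hz
  obtain ⟨U, hU⟩ := Ultrafilter.exists_le (Filter.atTop : Filter ℕ)
  have hex : ∀ i : ℤ, ∃ a : A, {t | z t i = a} ∈ U := by
    intro i
    have hcover : (⋃ a ∈ (Set.univ : Set A), {t | z t i = a}) ∈ U := by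
      have he : (⋃ a ∈ (Set.univ : Set A), {t | z t i = a}) = Set.univ := by
        ext t; simp
      rw [he]; exact Filter.univ_mem
    rw [Ultrafilter.finite_biUnion_mem_iff Set.finite_univ] at hcover
    obtain ⟨a, -, ha⟩ := hcover
    exact ⟨a, ha⟩
  choose y hy using hex
  have hwin : ∀ (n : ℤ) (len N : ℕ), ∃ t, N ≤ t ∧ ∀ j : ℕ, j < len → z t (n + j) = y (n + j) := by
    intro n len N
    have hinter : (⋂ j ∈ Finset.range len, {t | z t (n + j) = y (n + j)}) ∈ U :=
      Ultrafilter.mem_coe.mp ((Filter.biInter_finset_mem _).mpr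
        (fun j _ => Ultrafilter.mem_coe.mpr (hy (n + j))))
    have hN : {t : ℕ | N ≤ t} ∈ U := hU (Filter.mem_atTop N)
    obtain ⟨t, ht⟩ := Ultrafilter.nonempty_of_mem (Filter.inter_mem hinter hN)
    refine ⟨t, ht.2, fun j hj => ?_⟩
    have := ht.1
    simp only [Set.mem_iInter, Finset.mem_range] at this
    exact this j hj
  have hzu : ∀ (t : ℕ) (j : ℕ), j < u.length → z t (j : ℤ) = u.getD j d := by
    intro t j hj
    have h1 : ((j : ℤ) + t).toNat = t + j := by omega
    show (L t ++ u ++ R t).getD ((j : ℤ) + t).toNat d = u.getD j d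
    rw [h1, List.append_assoc, List.getD_append_right _ _ _ _ (by rw [hL]; omega),
      hL, Nat.add_sub_cancel_left, List.getD_append _ _ _ _ hj]
  have hyu : ∀ j : ℕ, j < u.length → y (j : ℤ) = u.getD j d := by
    intro j hj
    obtain ⟨t, ht⟩ := Ultrafilter.nonempty_of_mem (hy (j : ℤ))
    rw [← ht]
    exact hzu t j hj
  refine ⟨y, ?_, ?_⟩
  · intro w hwF hocc
    obtain ⟨n, hn⟩ := hocc
    obtain ⟨t, htN, hagree⟩ := hwin n w.length (n.natAbs + w.length + u.length + 1)
    set j : ℕ := (n + t).toNat with hj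
    have hjw : j + w.length ≤ (W t).length := by
      rw [hWlen]; omega
    have heq : w = ((W t).drop j).take w.length := by
      refine List.ext_getElem ?_ ?_
      · rw [List.length_take, List.length_drop]; omega
      · intro i hi1 hi2
        have hzi : z t (n + i) = y (n + i) := hagree i hi1
        have hyi : y (n + (i : ℤ)) = w.get ⟨i, hi1⟩ := hn ⟨i, hi1⟩
        rw [List.getElem_take, List.getElem_drop]
        have e1 : w[i] = y (n + i) := (hn ⟨i, hi1⟩).symm
        have e3 : z t (n + i) = (W t).getD ((n + (i : ℤ) + t).toNat) d := rfl
        have e4 : ((n : ℤ) + i + t).toNat = j + i := by omega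
        have e5 : (W t).getD (j + i) d = (W t)[j + i]'(by omega) :=
          List.getD_eq_getElem _ _ (by omega)
        rw [e1, ← hzi, e3, e4, e5]
    have hinf : w <:+: W t := by
      rw [heq]
      exact (List.take_prefix _ _).isInfix.trans (List.drop_suffix _ _).isInfix
    exact hadm t w hwF hinf
  · refine ⟨0, fun i => ?_⟩
    have h1 : y ((i : ℕ) : ℤ) = u.getD i d := hyu i i.2
    rw [zero_add, h1, List.getD_eq_getElem _ _ i.2]
    rfl

lemma lang_lower {F : Set (List A)} (hF : [] ∉ F) (x : ℝ≥0∞) (hx0 : x ≠ 0) (hxt : x ≠ ⊤)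
    (k : ℕ) (hk : 1 ≤ k) (hkA : k ≤ Fintype.card A)
    (hbound : Sinf F x + 1 < x * ((Fintype.card A - k + 1 : ℕ) : ℝ≥0∞)) (m : ℕ) :
    k ^ m ≤ (lang (XAF F) m).ncard := by
  classical
  have hsub : ↑((allWords A m).filter (fun u => ∀ t, Biext F t u)) ⊆ lang (XAF F) m := by
    intro u hu
    rw [Finset.mem_coe, Finset.mem_filter, mem_allWords] at hu
    obtain ⟨y, hy1, hy2⟩ := exists_point hu.2
    exact ⟨hu.1, y, hy1, hy2⟩
  have hfin : (lang (XAF F) m).Finite := by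
    refine (allWords A m).finite_toSet.subset (fun u hu => ?_)
    rw [Finset.mem_coe, mem_allWords]
    exact hu.1
  calc k ^ m ≤ ((allWords A m).filter (fun u => ∀ t, Biext F t u)).card :=
    lfin_lower hF x hx0 hxt k hk hkA hbound m
  _ = (↑((allWords A m).filter (fun u => ∀ t, Biext F t u)) : Set (List A)).ncard :=
    (Set.ncard_coe_finset _).symm
  _ ≤ (lang (XAF F) m).ncard := Set.ncard_le_ncard hsub hfin

end Aux

/-- a lower bound on the entropy of `X(A, F)` from Miller's criterion. -/
theorem entropy_lower_bound_of_small_forbidden_list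
    {A : Type} [Fintype A] [Nonempty A]
    (F : Set (List A)) (hFne : [] ∉ F)
    (c : ℝ) (hc : 1 / (Fintype.card A : ℝ) < c)
    (k : ℕ) (hk : 0 < k) (hkA : k < Fintype.card A)
    (hsum : ∑' v : F, ENNReal.ofReal c ^ (v : List A).length <
      ENNReal.ofReal (c * ((Fintype.card A : ℝ) - k + 1) - 1)) :
    ∀ hX : ℝ, entropyIs (XAF F) hX → Real.log k ≤ hX := by
  intro hX hent
  classical
  set x : ℝ≥0∞ := ENNReal.ofReal c with hxdef
  have hcard : 1 ≤ Fintype.card A := Fintype.card_pos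
  have hcpos : 0 < c := lt_trans (by positivity) hc
  have hx0 : x ≠ 0 := (ENNReal.ofReal_pos.mpr hcpos).ne'
  have hxt : x ≠ ⊤ := ENNReal.ofReal_ne_top
  have hkA' : k ≤ Fintype.card A := hkA.le
  have harg : 0 < c * ((Fintype.card A : ℝ) - k + 1) - 1 := by
    by_contra h
    push_neg at h
    rw [ENNReal.ofReal_eq_zero.mpr h] at hsum
    simp at hsum
  have hcast : ((Fintype.card A - k + 1 : ℕ) : ℝ) = (Fintype.card A : ℝ) - k + 1 := by
    rw [Nat.cast_add, Nat.cast_sub hkA', Nat.cast_one]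
  have hbound : Sinf F x + 1 < x * ((Fintype.card A - k + 1 : ℕ) : ℝ≥0∞) := by
    have h1 : Sinf F x + 1 < ENNReal.ofReal (c * ((Fintype.card A : ℝ) - k + 1) - 1) + 1 :=
      ENNReal.add_lt_add_right ENNReal.one_ne_top hsum
    have h2 : ENNReal.ofReal (c * ((Fintype.card A : ℝ) - k + 1) - 1) + 1
        = ENNReal.ofReal (c * ((Fintype.card A : ℝ) - k + 1)) := by
      rw [← ENNReal.ofReal_one, ← ENNReal.ofReal_add harg.le zero_le_one, sub_add_cancel]
    have h3 : x * ((Fintype.card A - k + 1 : ℕ) : ℝ≥0∞)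
        = ENNReal.ofReal (c * ((Fintype.card A : ℝ) - k + 1)) := by
      rw [← ENNReal.ofReal_natCast (Fintype.card A - k + 1), hcast,
        ← ENNReal.ofReal_mul hcpos.le]
    rw [h3, ← h2]
    exact h1
  have hcount : ∀ m : ℕ, k ^ m ≤ (lang (XAF F) m).ncard :=
    lang_lower hFne x hx0 hxt k hk hkA' hbound
  have hev : ∀ᶠ m : ℕ in Filter.atTop,
      Real.log k ≤ Real.log ((lang (XAF F) m).ncard : ℝ) / m := by
    filter_upwards [Filter.eventually_ge_atTop 1] with m hm
    have hkR : (1 : ℝ) ≤ (k : ℝ) := by exact_mod_cast hk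
    have h1 : ((k : ℝ)) ^ m ≤ ((lang (XAF F) m).ncard : ℝ) := by
      exact_mod_cast hcount m
    have h2 : Real.log ((k : ℝ) ^ m) ≤ Real.log ((lang (XAF F) m).ncard : ℝ) :=
      Real.log_le_log (by positivity) h1
    rw [Real.log_pow] at h2
    rw [le_div_iff₀ (by exact_mod_cast hm : (0:ℝ) < (m:ℝ))]
    calc Real.log k * m = m * Real.log k := mul_comm _ _
    _ ≤ _ := h2
  exact ge_of_tendsto hent hev


end SlowForbidden
end

section
/- Let A be a finite alphabet, X ⊆ A^ℤ a nonempty subshift, and β a real number with β < 2·h(X) − log|A|. Then the set S := {n ∈ ℕ : for all 1 ≤ k < n, |L_n(X)|/|L_{n−k}(X)| ≥ e^{kβ}} has lower density strictly greater than 1/2. -/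
open MeasureTheory Filter Set
open scoped ENNReal

namespace SlowForbidden

section PlissAux

variable {A : Type} [Fintype A] [Nonempty A] {X : Set (ℤ → A)}

omit [Nonempty A] in
lemma lang_finite (n : ℕ) : (lang X n).Finite :=
  (List.finite_length_eq A n).subset fun _ hw => hw.1

omit [Fintype A] [Nonempty A] in
lemma lang_nonempty (hXne : X.Nonempty) (n : ℕ) : (lang X n).Nonempty := by
  obtain ⟨x, hx⟩ := hXne
  refine ⟨List.ofFn (fun i : Fin n => x (i : ℕ)), List.length_ofFn, x, hx, 0, ?_⟩
  intro i
  simp [List.get_ofFn]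

omit [Fintype A] [Nonempty A] in
lemma occursIn_take {w : List A} {x : ℤ → A} (h : OccursIn w x) (m : ℕ) :
    OccursIn (w.take m) x := by
  obtain ⟨p, hp⟩ := h
  refine ⟨p, fun i => ?_⟩
  have hi : (i : ℕ) < w.length := lt_of_lt_of_le i.2 (by simp [List.length_take])
  have := hp ⟨i, hi⟩
  simpa [List.get_eq_getElem, List.getElem_take] using this

omit [Fintype A] [Nonempty A] in
lemma occursIn_drop {w : List A} {x : ℤ → A} (h : OccursIn w x) (m : ℕ) :
    OccursIn (w.drop m) x := by
  obtain ⟨p, hp⟩ := h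
  refine ⟨p + m, fun i => ?_⟩
  have hi : m + (i : ℕ) < w.length := by
    have := i.2; simp [List.length_drop] at this; omega
  have := hp ⟨m + i, hi⟩
  simp only [List.get_eq_getElem, List.getElem_drop] at this ⊢
  rw [show p + (m : ℕ) + (i : ℕ) = p + ((m + i : ℕ) : ℤ) by push_cast; ring]
  exact this

omit [Fintype A] [Nonempty A] in
lemma take_mem_lang {w : List A} {m n : ℕ} (h : w ∈ lang X (m + n)) :
    w.take m ∈ lang X m := by
  obtain ⟨hl, x, hx, ho⟩ := h
  exact ⟨by simp [List.length_take, hl], x, hx, occursIn_take ho m⟩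

omit [Fintype A] [Nonempty A] in
lemma drop_mem_lang {w : List A} {m n : ℕ} (h : w ∈ lang X (m + n)) :
    w.drop m ∈ lang X n := by
  obtain ⟨hl, x, hx, ho⟩ := h
  exact ⟨by simp [List.length_drop, hl], x, hx, occursIn_drop ho m⟩

lemma ncard_prod' {α β : Type*} (s : Set α) (t : Set β) :
    (s ×ˢ t).ncard = s.ncard * t.ncard := by
  rw [← Nat.card_coe_set_eq, ← Nat.card_coe_set_eq, ← Nat.card_coe_set_eq,
    Nat.card_congr (Equiv.Set.prod s t), Nat.card_prod]

omit [Nonempty A] in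
lemma lang_subadd (m n : ℕ) :
    (lang X (m + n)).ncard ≤ (lang X m).ncard * (lang X n).ncard := by
  rw [← ncard_prod']
  refine Set.ncard_le_ncard_of_injOn (fun w => (w.take m, w.drop m))
    (fun w hw => ⟨take_mem_lang hw, drop_mem_lang hw⟩) ?_
    (((lang_finite m).prod (lang_finite n)))
  intro w hw v hv he
  have h1 := congrArg Prod.fst he
  have h2 := congrArg Prod.snd he
  simp only at h1 h2
  have : w.take m ++ w.drop m = v.take m ++ v.drop m := by rw [h1, h2]
  simpa using this

omit [Nonempty A] in
lemma lang_one_le : (lang X 1).ncard ≤ Fintype.card A := by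
  have h1 : (Option.some '' (Set.univ : Set A)).ncard = Fintype.card A := by
    rw [Set.ncard_image_of_injective _ (Option.some_injective A)]
    simp [Set.ncard_univ, Nat.card_eq_fintype_card]
  rw [← h1]
  refine Set.ncard_le_ncard_of_injOn (fun w => w.head?) ?_ ?_
    (Set.finite_univ.image _)
  · intro w hw
    obtain ⟨a, rfl⟩ := List.length_eq_one_iff.1 hw.1
    exact ⟨a, trivial, rfl⟩
  · intro w hw v hv he
    obtain ⟨a, rfl⟩ := List.length_eq_one_iff.1 hw.1
    obtain ⟨b, rfl⟩ := List.length_eq_one_iff.1 hv.1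
    simpa using he

omit [Nonempty A] in
lemma lang_pos (hXne : X.Nonempty) (n : ℕ) : 0 < (lang X n).ncard :=
  (Set.ncard_pos (lang_finite n)).2 (lang_nonempty hXne n)

omit [Fintype A] [Nonempty A] in
lemma lang_zero_card (hXne : X.Nonempty) : (lang X 0).ncard = 1 := by
  have : lang X 0 = {([] : List A)} := by
    ext w
    constructor
    · intro hw
      exact List.length_eq_zero_iff.1 hw.1
    · rintro rfl
      obtain ⟨x, hx⟩ := hXne
      exact ⟨rfl, x, hx, 0, fun i => i.elim0⟩
  rw [this, Set.ncard_singleton]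

/-- General Pliss-type counting lemma for records of a sequence. -/
lemma pliss_counting (c : ℕ → ℝ) (Δ : ℝ) (hΔ : 0 ≤ Δ)
    (hstep : ∀ n, 1 ≤ n → c (n + 1) ≤ c n + Δ) (hc1 : c 1 ≤ Δ)
    (S : Set ℕ) (hS : ∀ m, m ∈ S ↔ ∀ j, 1 ≤ j → j < m → c j ≤ c m) :
    ∀ n, 1 ≤ n → ∀ j, 1 ≤ j → j ≤ n → c j ≤ Δ * ((S ∩ Set.Icc 1 n).ncard : ℝ) := by
  have hfin : ∀ n : ℕ, (S ∩ Set.Icc 1 n).Finite :=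
    fun n => (Set.finite_Icc 1 n).subset Set.inter_subset_right
  intro n hn
  induction n, hn using Nat.le_induction with
  | base =>
      intro j hj1 hj2
      have hj : j = 1 := le_antisymm hj2 hj1
      subst hj
      have h1S : (1 : ℕ) ∈ S := (hS 1).2 (by intro j h1 h2; omega)
      have hset : S ∩ Set.Icc 1 1 = {1} := by
        ext x
        simp only [Set.mem_inter_iff, Set.mem_Icc, Set.mem_singleton_iff]
        constructor
        · rintro ⟨_, h1, h2⟩; omega
        · rintro rfl; exact ⟨h1S, le_rfl, le_rfl⟩
      rw [hset, Set.ncard_singleton]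
      simpa using hc1
  | succ n hn ih =>
      have hsubset : S ∩ Set.Icc 1 n ⊆ S ∩ Set.Icc 1 (n + 1) := by
        rintro x ⟨h1, h2, h3⟩
        exact ⟨h1, h2, h3.trans (by omega)⟩
      have hmono : ((S ∩ Set.Icc 1 n).ncard : ℝ) ≤ ((S ∩ Set.Icc 1 (n + 1)).ncard : ℝ) := by
        exact_mod_cast Set.ncard_le_ncard hsubset (hfin (n + 1))
      intro j hj1 hj2
      rcases Nat.lt_or_ge j (n + 1) with hlt | hge
      · exact (ih j hj1 (by omega)).trans (by nlinarith)
      · have hj : j = n + 1 := by omega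
        subst hj
        by_cases hcase : ∀ i, 1 ≤ i → i ≤ n → c i < c (n + 1)
        · have hmemS : (n + 1) ∈ S :=
            (hS (n + 1)).2 (fun i hi1 hi2 => (hcase i hi1 (by omega)).le)
          have hnotmem : (n + 1) ∉ S ∩ Set.Icc 1 n := fun h => by
            have := h.2.2; omega
          have hins : S ∩ Set.Icc 1 (n + 1) = insert (n + 1) (S ∩ Set.Icc 1 n) := by
            ext x
            simp only [Set.mem_inter_iff, Set.mem_Icc, Set.mem_insert_iff]
            constructor
            · rintro ⟨hxS, hx1, hx2⟩
              rcases Nat.lt_or_ge x (n + 1) with h | h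
              · exact Or.inr ⟨hxS, hx1, by omega⟩
              · exact Or.inl (by omega)
            · rintro (rfl | ⟨hxS, hx1, hx2⟩)
              · exact ⟨hmemS, by omega, le_rfl⟩
              · exact ⟨hxS, hx1, by omega⟩
          have hcard : (S ∩ Set.Icc 1 (n + 1)).ncard = (S ∩ Set.Icc 1 n).ncard + 1 := by
            rw [hins, Set.ncard_insert_of_notMem hnotmem (hfin n)]
          have h1 : c (n + 1) ≤ c n + Δ := hstep n hn
          have h2 : c n ≤ Δ * ((S ∩ Set.Icc 1 n).ncard : ℝ) := ih n hn le_rfl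
          rw [hcard]
          push_cast
          linarith
        · push_neg at hcase
          obtain ⟨i, hi1, hi2, hle⟩ := hcase
          exact hle.trans ((ih i hi1 hi2).trans (by nlinarith))

end PlissAux

/-- Pliss-type lemma: the set of `n` for which all ratios
`|L_n(X)|/|L_{n-k}(X)|` are at least `e^{kβ}` has lower density greater than `1/2`. -/
theorem pliss_set_lower_density
    {A : Type} [Fintype A] [Nonempty A] [DecidableEq A]
    [TopologicalSpace A] [DiscreteTopology A]
    (X : Set (ℤ → A)) (hXne : X.Nonempty) (hXcl : IsClosed X)
    (hXinv : shiftMap A '' X = X)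
    (hX : ℝ) (hent : entropyIs X hX)
    (β : ℝ) (hβ : β < 2 * hX - Real.log (Fintype.card A)) :
    1 / 2 < Filter.liminf (fun n : ℕ =>
      (({m : ℕ | ∀ k : ℕ, 1 ≤ k → k < m →
          Real.exp (k * β) ≤ ((lang X m).ncard : ℝ) / ((lang X (m - k)).ncard : ℝ)}
        ∩ Set.Icc 1 n).ncard : ℝ) / n) atTop := by
  classical
  have hLpos : ∀ n : ℕ, (0:ℝ) < ((lang X n).ncard : ℝ) := fun n => by
    exact_mod_cast lang_pos hXne n
  set a : ℕ → ℝ := fun n => Real.log ((lang X n).ncard : ℝ) with ha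
  -- subadditivity of `a`
  have hadd : ∀ m l : ℕ, a (m + l) ≤ a m + a l := by
    intro m l
    have h1 : ((lang X (m + l)).ncard : ℝ) ≤ ((lang X m).ncard : ℝ) * ((lang X l).ncard : ℝ) := by
      exact_mod_cast lang_subadd m l
    calc a (m + l) ≤ Real.log (((lang X m).ncard : ℝ) * ((lang X l).ncard : ℝ)) :=
          Real.log_le_log (hLpos (m + l)) h1
      _ = a m + a l := Real.log_mul (hLpos m).ne' (hLpos l).ne'
  have ha0 : a 0 = 0 := by
    simp [ha, lang_zero_card hXne]
  -- lower bound `n * hX ≤ a n`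
  have hlower : ∀ n : ℕ, 1 ≤ n → (n : ℝ) * hX ≤ a n := by
    intro n hn
    have hmul : ∀ k : ℕ, a (k * n) ≤ k * a n := by
      intro k
      induction k with
      | zero => simp [ha0]
      | succ k ih =>
          have h2 : (k + 1) * n = k * n + n := by ring
          rw [h2]
          push_cast
          calc a (k * n + n) ≤ a (k * n) + a n := hadd (k * n) n
            _ ≤ k * a n + a n := by linarith
            _ = (k + 1) * a n := by ring
    have htend : Tendsto (fun k : ℕ => a (k * n) / ((k * n : ℕ) : ℝ)) atTop (nhds hX) := by
      refine hent.comp ?_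
      exact tendsto_atTop_mono (fun k => Nat.le_mul_of_pos_right k (by omega)) tendsto_id
    have hle : hX ≤ a n / n := by
      refine le_of_tendsto htend ?_
      filter_upwards [eventually_ge_atTop 1] with k hk
      have hk0 : (0:ℝ) < (k : ℝ) := by exact_mod_cast hk
      have hn0 : (0:ℝ) < (n : ℝ) := by exact_mod_cast hn
      have hstep : a (k * n) / ((k : ℝ) * n) ≤ (k * a n) / ((k : ℝ) * n) := by
        apply div_le_div_of_nonneg_right (hmul k)
        positivity
      calc a (k * n) / ((k * n : ℕ) : ℝ) = a (k * n) / ((k : ℝ) * n) := by push_cast; ring_nf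
        _ ≤ (k * a n) / ((k : ℝ) * n) := hstep
        _ = a n / n := by rw [mul_div_mul_left _ _ hk0.ne']
    have hn0 : (0:ℝ) < (n : ℝ) := by exact_mod_cast hn
    calc (n : ℝ) * hX ≤ (n : ℝ) * (a n / n) := by nlinarith
      _ = a n := by field_simp
  -- `a 1 ≤ log |A|` and one-step growth
  have haone : a 1 ≤ Real.log (Fintype.card A) := by
    apply Real.log_le_log (hLpos 1)
    exact_mod_cast lang_one_le
  have hsucc : ∀ n : ℕ, a (n + 1) ≤ a n + Real.log (Fintype.card A) := by
    intro n
    calc a (n + 1) ≤ a n + a 1 := hadd n 1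
      _ ≤ a n + Real.log (Fintype.card A) := by linarith
  -- basic entropy inequalities
  have hhXle : hX ≤ Real.log (Fintype.card A) := by
    have h1 := hlower 1 le_rfl
    simp only [Nat.cast_one, one_mul] at h1
    linarith
  have hγ : 0 < hX - β := by linarith
  have hΔ : 0 < Real.log (Fintype.card A) - β := by linarith
  set Δ : ℝ := Real.log (Fintype.card A) - β with hΔdef
  set c : ℕ → ℝ := fun n => a n - n * β with hc
  -- characterization of the Pliss set
  set S : Set ℕ := {m : ℕ | ∀ k : ℕ, 1 ≤ k → k < m →
      Real.exp (k * β) ≤ ((lang X m).ncard : ℝ) / ((lang X (m - k)).ncard : ℝ)} with hSdef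
  have hiff : ∀ m k : ℕ, 1 ≤ k → k < m →
      (Real.exp (k * β) ≤ ((lang X m).ncard : ℝ) / ((lang X (m - k)).ncard : ℝ) ↔
        c (m - k) ≤ c m) := by
    intro m k hk1 hk2
    rw [← Real.le_log_iff_exp_le (div_pos (hLpos m) (hLpos (m - k))),
      Real.log_div (hLpos m).ne' (hLpos (m - k)).ne']
    have hcast : ((m - k : ℕ) : ℝ) = (m : ℝ) - (k : ℝ) := by
      rw [Nat.cast_sub hk2.le]
    simp only [hc]
    rw [hcast]
    constructor <;> intro h <;> nlinarith
  have hmemS : ∀ m : ℕ, m ∈ S ↔ ∀ j, 1 ≤ j → j < m → c j ≤ c m := by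
    intro m
    simp only [hSdef, Set.mem_setOf_eq]
    constructor
    · intro h j hj1 hjm
      have hk : m - (m - j) = j := by omega
      have := (hiff m (m - j) (by omega) (by omega)).1 (h (m - j) (by omega) (by omega))
      rwa [hk] at this
    · intro h k hk1 hkm
      exact (hiff m k hk1 hkm).2 (h (m - k) (by omega) (by omega))
  -- apply the counting lemma
  have hstepc : ∀ n, 1 ≤ n → c (n + 1) ≤ c n + Δ := by
    intro n _
    have := hsucc n
    simp only [hc, hΔdef]
    push_cast
    linarith
  have hc1 : c 1 ≤ Δ := by
    simp only [hc, hΔdef]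
    push_cast
    linarith
  have key := pliss_counting c Δ hΔ.le hstepc hc1 S hmemS
  -- lower bound on densities
  have hfin : ∀ n : ℕ, (S ∩ Set.Icc 1 n).Finite :=
    fun n => (Set.finite_Icc 1 n).subset Set.inter_subset_right
  have hIcc : ∀ n : ℕ, (Set.Icc 1 n).ncard = n := by
    intro n
    rw [← Finset.coe_Icc, Set.ncard_coe_finset, Nat.card_Icc]
    omega
  have hbound : ∀ n : ℕ, 1 ≤ n →
      (hX - β) / Δ ≤ ((S ∩ Set.Icc 1 n).ncard : ℝ) / n := by
    intro n hn
    have hn0 : (0:ℝ) < (n : ℝ) := by exact_mod_cast hn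
    have h1 : c n ≤ Δ * ((S ∩ Set.Icc 1 n).ncard : ℝ) := key n hn n hn le_rfl
    have h2 : (n : ℝ) * (hX - β) ≤ c n := by
      have := hlower n hn
      simp only [hc]
      nlinarith
    rw [div_le_div_iff₀ hΔ hn0]
    nlinarith
  have hub : ∀ n : ℕ, 1 ≤ n → ((S ∩ Set.Icc 1 n).ncard : ℝ) / n ≤ 1 := by
    intro n hn
    have hn0 : (0:ℝ) < (n : ℝ) := by exact_mod_cast hn
    rw [div_le_one hn0]
    have h1 : (S ∩ Set.Icc 1 n).ncard ≤ (Set.Icc 1 n).ncard :=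
      Set.ncard_le_ncard Set.inter_subset_right (Set.finite_Icc 1 n)
    rw [hIcc n] at h1
    exact_mod_cast h1
  have hhalf : (1:ℝ) / 2 < (hX - β) / Δ := by
    rw [div_lt_div_iff₀ (by norm_num) hΔ]
    simp only [hΔdef]
    linarith
  refine lt_of_lt_of_le hhalf ?_
  refine Filter.le_liminf_of_le ?_ ?_
  · refine Filter.isCoboundedUnder_ge_of_eventually_le atTop (x := (1:ℝ)) ?_
    filter_upwards [eventually_ge_atTop 1] with n hn
    exact hub n hn
  · filter_upwards [eventually_ge_atTop 1] with n hn
    exact hbound n hn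

end SlowForbidden
end

section
/- Let A be a finite alphabet, F a set of finite words over A with F_n := F ∩ A^n, and X = X(A, F) the induced subshift. If ∑_{n=1}^{∞} |F_n|·(3/|A|)^n < 1/5, then h(X) > log(3|A|/5). -/
open MeasureTheory Filter Set
open scoped ENNReal

namespace SlowForbidden

namespace SF14

attribute [local instance] Classical.propDecidable

set_option linter.unusedSectionVars false
set_option linter.unusedVariables false
set_option maxHeartbeats 1000000

variable {A : Type} [Fintype A] [Nonempty A]

/-- occurrence of a word at position `p` in a finite configuration -/
def OccF {T : ℕ} (w : List A) (p : ℕ) (c : Fin T → A) : Prop :=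
  ∀ i : Fin w.length, ∀ h : p + i.1 < T, c ⟨p + i.1, h⟩ = w.get i

/-- the intervals `[p, p+m)` and `[p', p'+m')` overlap -/
def ovl (p m p' m' : ℕ) : Prop := p' < p + m ∧ p < p' + m'

/-- all events: pairs (word, position) -/
def events (T : ℕ) (G : Finset (List A)) : Finset (List A × ℕ) :=
  (G ×ˢ Finset.range T).filter (fun e => e.2 + e.1.length ≤ T)

/-- events whose support overlaps `[p, p+m)` -/
noncomputable def nbr (T : ℕ) (G : Finset (List A)) (p m : ℕ) : Finset (List A × ℕ) :=
  (events T G).filter (fun f => ovl p m f.2 f.1.length)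

noncomputable def wt (A : Type) [Fintype A] (w : List A) : ℝ :=
  (2 / (Fintype.card A : ℝ)) ^ w.length

/-- number of configurations avoiding all events in `S` -/
noncomputable def AC (T : ℕ) (S : Finset (List A × ℕ)) : ℕ :=
  (Finset.univ.filter (fun c : Fin T → A => ∀ e ∈ S, ¬ OccF e.1 e.2 c)).card

/-- number of configurations avoiding all events in `S` and containing `w` at `p` -/
noncomputable def ACO (T : ℕ) (S : Finset (List A × ℕ)) (w : List A) (p : ℕ) : ℕ :=
  (Finset.univ.filter (fun c : Fin T → A =>
    (∀ e ∈ S, ¬ OccF e.1 e.2 c) ∧ OccF w p c)).card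

lemma AC_empty (T : ℕ) : AC (A := A) T ∅ = Fintype.card A ^ T := by
  classical
  simp [AC, Finset.filter_true_of_mem, Finset.card_univ]

lemma AC_split (T : ℕ) (S : Finset (List A × ℕ)) (w : List A) (p : ℕ) :
    AC T S = AC T (insert (w, p) S) + ACO T S w p := by
  classical
  have h := Finset.card_filter_add_card_filter_not
    (s := Finset.univ.filter (fun c : Fin T → A => ∀ e ∈ S, ¬ OccF e.1 e.2 c))
    (p := fun c : Fin T → A => OccF w p c)
  rw [Finset.filter_filter, Finset.filter_filter] at h
  have h1 : (Finset.univ.filter (fun c : Fin T → A =>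
      (∀ e ∈ S, ¬ OccF e.1 e.2 c) ∧ OccF w p c)).card = ACO T S w p := rfl
  have h2 : (Finset.univ.filter (fun c : Fin T → A =>
      (∀ e ∈ S, ¬ OccF e.1 e.2 c) ∧ ¬ OccF w p c)).card = AC T (insert (w, p) S) := by
    unfold AC
    congr 1
    apply Finset.filter_congr
    intro c _
    simp only [Finset.forall_mem_insert]
    tauto
  have h3 : (Finset.univ.filter (fun c : Fin T → A => ∀ e ∈ S, ¬ OccF e.1 e.2 c)).card
      = AC T S := rfl
  rw [h1, h2, h3] at h
  omega

lemma AC_mono (T : ℕ) {S S' : Finset (List A × ℕ)} (h : S ⊆ S') : AC T S' ≤ AC T S := by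
  apply Finset.card_le_card
  intro c hc
  simp only [AC, Finset.mem_filter, Finset.mem_univ, true_and] at hc ⊢
  exact fun e he => hc e (h he)

lemma ACO_mono (T : ℕ) {S S' : Finset (List A × ℕ)} (w : List A) (p : ℕ) (h : S ⊆ S') :
    ACO T S' w p ≤ ACO T S w p := by
  apply Finset.card_le_card
  intro c hc
  simp only [ACO, Finset.mem_filter, Finset.mem_univ, true_and] at hc ⊢
  exact ⟨fun e he => hc.1 e (h he), hc.2⟩


lemma card_interval_fin (T p m : ℕ) (hv : p + m ≤ T) :
    (Finset.univ.filter (fun j : Fin T => p ≤ j.1 ∧ j.1 < p + m)).card = m := by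
  classical
  have : (Finset.univ.filter (fun j : Fin T => p ≤ j.1 ∧ j.1 < p + m)).card
      = (Finset.range m).card := by
    refine Finset.card_bij' (fun (j : Fin T) (_ : j ∈ Finset.univ.filter (fun j : Fin T => p ≤ j.1 ∧ j.1 < p + m)) => j.1 - p)
      (fun (k : ℕ) (hk : k ∈ Finset.range m) => (⟨p + k, by
        have := Finset.mem_range.1 hk; omega⟩ : Fin T)) ?_ ?_ ?_ ?_
    · intro j hj
      simp only [Finset.mem_filter] at hj
      simp only [Finset.mem_range]; omega
    · intro k hk
      have := Finset.mem_range.1 hk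
      simp only [Finset.mem_filter, Finset.mem_univ, true_and]
      omega
    · intro j hj
      simp only [Finset.mem_filter] at hj
      apply Fin.ext; simp; omega
    · intro k hk; simp
  simpa using this

lemma indep (T : ℕ) (S : Finset (List A × ℕ)) (w : List A) (p : ℕ)
    (hv : p + w.length ≤ T)
    (hd : ∀ f ∈ S, ¬ ((f.2 < p + w.length) ∧ (p < f.2 + f.1.length))) :
    (Finset.univ.filter (fun c : Fin T → A =>
      (∀ e ∈ S, ¬ OccF e.1 e.2 c) ∧ OccF w p c)).card * Fintype.card A ^ w.length ≤
    (Finset.univ.filter (fun c : Fin T → A => ∀ e ∈ S, ¬ OccF e.1 e.2 c)).card := by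
  classical
  set m := w.length with hm
  set ι : (Fin T → A) × (Fin T → A) → (Fin T → A) :=
    fun cd j => if p ≤ j.1 ∧ j.1 < p + m then cd.2 j else cd.1 j with hι
  set s : Finset ((Fin T → A) × (Fin T → A)) :=
    (Finset.univ.filter (fun c : Fin T → A =>
      (∀ e ∈ S, ¬ OccF e.1 e.2 c) ∧ OccF w p c)) ×ˢ Finset.univ with hs
  -- events in S are untouched by overriding the support of (w,p)
  have factA : ∀ f ∈ S, ∀ cd : (Fin T → A) × (Fin T → A),
      (OccF f.1 f.2 (ι cd) ↔ OccF f.1 f.2 cd.1) := by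
    intro f hf cd
    have hpt : ∀ (i : ℕ) (h : f.2 + i < T), i < f.1.length →
        ι cd ⟨f.2 + i, h⟩ = cd.1 ⟨f.2 + i, h⟩ := by
      intro i h hi
      have : ¬ (p ≤ f.2 + i ∧ f.2 + i < p + m) := by
        intro hcon
        exact hd f hf (by omega)
      simp only [hι, if_neg this]
    constructor <;> intro H i hi
    · rw [← hpt i.1 hi i.2]; exact H i hi
    · rw [hpt i.1 hi i.2]; exact H i hi
  -- the image of the gluing map avoids S
  have himg : (s.image ι).card ≤
      (Finset.univ.filter (fun c : Fin T → A => ∀ e ∈ S, ¬ OccF e.1 e.2 c)).card := by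
    apply Finset.card_le_card
    intro z hz
    rcases Finset.mem_image.1 hz with ⟨cd, hcd, rfl⟩
    rcases Finset.mem_product.1 hcd with ⟨hc1, _⟩
    simp only [Finset.mem_filter, Finset.mem_univ, true_and] at hc1 ⊢
    intro e he H
    exact hc1.1 e he ((factA e he cd).1 H)
  -- fibers of the gluing map are small
  have hfib : ∀ z ∈ s.image ι,
      (s.filter (fun cd => ι cd = z)).card ≤ Fintype.card A ^ (T - m) := by
    intro z _
    have hinj : Set.InjOn (fun cd : (Fin T → A) × (Fin T → A) =>
        (fun j : {j : Fin T // ¬ (p ≤ j.1 ∧ j.1 < p + m)} => cd.2 j.1))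
        ↑(s.filter (fun cd => ι cd = z)) := by
      intro cd hcd cd' hcd' hφ
      simp only [Finset.coe_filter, Set.mem_setOf_eq] at hcd hcd'
      have hocc : OccF w p cd.1 := (Finset.mem_filter.1 (Finset.mem_product.1 hcd.1).1).2.2
      have hocc' : OccF w p cd'.1 := (Finset.mem_filter.1 (Finset.mem_product.1 hcd'.1).1).2.2
      have hz1 : ι cd = z := hcd.2
      have hz2 : ι cd' = z := hcd'.2
      have h1 : cd.1 = cd'.1 := by
        funext j
        by_cases hj : p ≤ j.1 ∧ j.1 < p + m
        · have hjlt : p + (j.1 - p) < T := by omega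
          have hi : j.1 - p < w.length := by omega
          have e1 := hocc ⟨j.1 - p, hi⟩ hjlt
          have e2 := hocc' ⟨j.1 - p, hi⟩ hjlt
          have hj' : j = ⟨p + (j.1 - p), hjlt⟩ := by
            apply Fin.ext; simp; omega
          rw [hj', e1, e2]
        · have e1 : ι cd j = cd.1 j := by simp only [hι, if_neg hj]
          have e2 : ι cd' j = cd'.1 j := by simp only [hι, if_neg hj]
          rw [← e1, ← e2, hz1, hz2]
      have h2 : cd.2 = cd'.2 := by
        funext j
        by_cases hj : p ≤ j.1 ∧ j.1 < p + m
        · have e1 : ι cd j = cd.2 j := by simp only [hι, if_pos hj]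
          have e2 : ι cd' j = cd'.2 j := by simp only [hι, if_pos hj]
          rw [← e1, ← e2, hz1, hz2]
        · have := congrFun hφ ⟨j, hj⟩
          simpa using this
      exact Prod.ext h1 h2
    calc (s.filter (fun cd => ι cd = z)).card
        ≤ Fintype.card ({j : Fin T // ¬ (p ≤ j.1 ∧ j.1 < p + m)} → A) := by
          have := Finset.card_le_card_of_injOn
            (f := fun cd : (Fin T → A) × (Fin T → A) =>
              (fun j : {j : Fin T // ¬ (p ≤ j.1 ∧ j.1 < p + m)} => cd.2 j.1))
            (s := s.filter (fun cd => ι cd = z)) (t := Finset.univ)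
            (fun a _ => Finset.mem_univ _) hinj
          simpa [Finset.card_univ] using this
      _ = Fintype.card A ^ (T - m) := by
          rw [Fintype.card_fun]
          congr 1
          rw [Fintype.card_subtype]
          have hpos := card_interval_fin T p m hv
          have hneg := Finset.card_filter_add_card_filter_not
            (s := (Finset.univ : Finset (Fin T)))
            (p := fun j : Fin T => p ≤ j.1 ∧ j.1 < p + m)
          rw [hpos] at hneg
          have : (Finset.univ : Finset (Fin T)).card = T := by simp
          omega
  -- combine
  have hcard : s.card ≤ Fintype.card A ^ (T - m) * (s.image ι).card :=
    Finset.card_le_mul_card_image s _ hfib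
  have hscard : s.card = (Finset.univ.filter (fun c : Fin T → A =>
      (∀ e ∈ S, ¬ OccF e.1 e.2 c) ∧ OccF w p c)).card * Fintype.card A ^ T := by
    rw [hs, Finset.card_product, Finset.card_univ, Fintype.card_fun, Fintype.card_fin]
  have hTm : Fintype.card A ^ T = Fintype.card A ^ m * Fintype.card A ^ (T - m) := by
    rw [← pow_add]; congr 1; omega
  have hfin : (Finset.univ.filter (fun c : Fin T → A =>
      (∀ e ∈ S, ¬ OccF e.1 e.2 c) ∧ OccF w p c)).card * Fintype.card A ^ m *
      Fintype.card A ^ (T - m) ≤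
      (Finset.univ.filter (fun c : Fin T → A => ∀ e ∈ S, ¬ OccF e.1 e.2 c)).card *
      Fintype.card A ^ (T - m) := by
    calc _ = s.card := by rw [hscard, hTm]; ring
    _ ≤ Fintype.card A ^ (T - m) * (s.image ι).card := hcard
    _ ≤ _ := by
        rw [mul_comm]
        exact Nat.mul_le_mul_right _ himg
  exact Nat.le_of_mul_le_mul_right hfin (by positivity)


lemma wt_nonneg (w : List A) : 0 ≤ wt A w := by unfold wt; positivity

def Cond (T : ℕ) (G : Finset (List A)) : Prop :=
  (∀ w ∈ G, wt A w ≤ 1/2) ∧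
  (∀ e ∈ events T G, (1:ℝ) ≤ wt A e.1 * (Fintype.card A:ℝ) ^ e.1.length *
      ∏ f ∈ nbr T G e.2 e.1.length, (1 - wt A f.1))

lemma mem_events {T : ℕ} {G : Finset (List A)} {e : List A × ℕ} :
    e ∈ events T G ↔ e.1 ∈ G ∧ e.2 < T ∧ e.2 + e.1.length ≤ T := by
  unfold events
  simp only [Finset.mem_filter, Finset.mem_product, Finset.mem_range]
  tauto

lemma nbr_subset_events {T : ℕ} {G : Finset (List A)} {p m : ℕ} :
    nbr T G p m ⊆ events T G := Finset.filter_subset _ _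

lemma one_sub_wt_nonneg {T : ℕ} {G : Finset (List A)} (hC : Cond T G)
    {f : List A × ℕ} (hf : f ∈ events T G) : 0 ≤ 1 - wt A f.1 := by
  have := hC.1 f.1 (mem_events.1 hf).1
  linarith

lemma prod_one_sub_wt_nonneg {T : ℕ} {G : Finset (List A)} (hC : Cond T G)
    {D : Finset (List A × ℕ)} (hD : D ⊆ events T G) :
    0 ≤ ∏ f ∈ D, (1 - wt A f.1) :=
  Finset.prod_nonneg (fun f hf => one_sub_wt_nonneg hC (hD hf))

theorem lll_main (T : ℕ) (G : Finset (List A)) (hC : Cond T G) :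
    ∀ S : Finset (List A × ℕ), S ⊆ events T G → ∀ e ∈ events T G,
      (1 - wt A e.1) * (AC T S : ℝ) ≤ (AC T (insert e S) : ℝ) := by
  intro S
  induction S using Finset.strongInduction with
  | _ S IH =>
    intro hSsub e he
    have hx0 : 0 ≤ wt A e.1 := wt_nonneg e.1
    by_cases heS : e ∈ S
    · rw [Finset.insert_eq_self.2 heS]
      have : (0:ℝ) ≤ AC T S := Nat.cast_nonneg _
      nlinarith
    · set m := e.1.length with hmdef
      set NB := nbr T G e.2 m with hNB
      -- inner chain using strong induction hypothesis
      have hchain : ∀ D : Finset (List A × ℕ), D ⊆ S ∩ NB →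
          (∏ f ∈ D, (1 - wt A f.1)) * (AC T (S \ D) : ℝ) ≤ (AC T S : ℝ) := by
        intro D
        induction D using Finset.induction_on with
        | empty => intro _; simp
        | insert f D hfD ihD =>
          intro hins
          have hfS : f ∈ S := (Finset.mem_inter.1 (hins (Finset.mem_insert_self f D))).1
          have hfnbr : f ∈ NB := (Finset.mem_inter.1 (hins (Finset.mem_insert_self f D))).2
          have hfev : f ∈ events T G := nbr_subset_events hfnbr
          have hDsub : D ⊆ S ∩ NB := fun a ha => hins (Finset.mem_insert_of_mem ha)
          have hss : S \ insert f D ⊂ S := by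
            apply Finset.ssubset_iff_of_subset (Finset.sdiff_subset) |>.2
            exact ⟨f, hfS, by simp⟩
          have hIH := IH (S \ insert f D) hss
            (fun a ha => hSsub (Finset.mem_sdiff.1 ha).1) f hfev
          have hset : insert f (S \ insert f D) = S \ D := by
            ext a
            simp only [Finset.mem_insert, Finset.mem_sdiff]
            constructor
            · rintro (rfl | ⟨haS, hnot⟩)
              · exact ⟨hfS, fun hD' => hfD hD'⟩
              · exact ⟨haS, fun hD' => hnot (Or.inr hD')⟩
            · rintro ⟨haS, hnotD⟩
              by_cases haf : a = f
              · exact Or.inl haf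
              · exact Or.inr ⟨haS, fun hmem => hmem.elim haf hnotD⟩
          rw [hset] at hIH
          rw [Finset.prod_insert hfD]
          have hprodD : 0 ≤ ∏ f ∈ D, (1 - wt A f.1) :=
            prod_one_sub_wt_nonneg hC (fun a ha => nbr_subset_events
              (Finset.mem_inter.1 (hDsub ha)).2)
          calc (1 - wt A f.1) * (∏ g ∈ D, (1 - wt A g.1)) * (AC T (S \ insert f D) : ℝ)
              = (∏ g ∈ D, (1 - wt A g.1)) * ((1 - wt A f.1) * (AC T (S \ insert f D) : ℝ)) := by
                ring
            _ ≤ (∏ g ∈ D, (1 - wt A g.1)) * (AC T (S \ D) : ℝ) :=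
                mul_le_mul_of_nonneg_left hIH hprodD
            _ ≤ (AC T S : ℝ) := ihD hDsub
      -- main estimates
      have hv : e.2 + m ≤ T := (mem_events.1 he).2.2
      have h2 : (ACO T S e.1 e.2 : ℝ) ≤ (ACO T (S \ NB) e.1 e.2 : ℝ) := by
        exact_mod_cast ACO_mono T e.1 e.2 (Finset.sdiff_subset)
      have h3 : (ACO T (S \ NB) e.1 e.2 : ℝ) * ((Fintype.card A : ℝ)) ^ m ≤
          (AC T (S \ NB) : ℝ) := by
        have hd : ∀ f ∈ S \ NB, ¬ ((f.2 < e.2 + e.1.length) ∧ (e.2 < f.2 + f.1.length)) := by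
          intro f hf hcon
          rcases Finset.mem_sdiff.1 hf with ⟨hfS, hfnot⟩
          apply hfnot
          rw [hNB]
          unfold nbr
          refine Finset.mem_filter.2 ⟨hSsub hfS, ?_⟩
          exact hcon
        have := indep T (S \ NB) e.1 e.2 hv hd
        exact_mod_cast this
      have h4 := hchain (S ∩ NB) (le_refl _)
      rw [Finset.sdiff_inter_self_left] at h4
      have h5 : (∏ f ∈ NB, (1 - wt A f.1)) ≤ (∏ f ∈ S ∩ NB, (1 - wt A f.1)) := by
        have hsub : S ∩ NB ⊆ NB := Finset.inter_subset_right
        rw [← Finset.prod_sdiff hsub]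
        have hle1 : (∏ f ∈ NB \ (S ∩ NB), (1 - wt A f.1)) ≤ 1 := by
          apply Finset.prod_le_one
          · intro f hf
            exact one_sub_wt_nonneg hC (nbr_subset_events (Finset.mem_sdiff.1 hf).1)
          · intro f hf
            have := wt_nonneg (A := A) f.1
            linarith
        have hX : 0 ≤ ∏ f ∈ S ∩ NB, (1 - wt A f.1) :=
          prod_one_sub_wt_nonneg hC (fun a ha => nbr_subset_events (Finset.mem_inter.1 ha).2)
        nlinarith
      have hcnd := hC.2 e he
      have hprodNB : 0 ≤ ∏ f ∈ NB, (1 - wt A f.1) :=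
        prod_one_sub_wt_nonneg hC nbr_subset_events
      have hACpos : (0:ℝ) ≤ AC T (S \ NB) := Nat.cast_nonneg _
      have hACOpos : (0:ℝ) ≤ ACO T (S \ NB) e.1 e.2 := Nat.cast_nonneg _
      have key : (ACO T S e.1 e.2 : ℝ) ≤ wt A e.1 * (AC T S : ℝ) := by
        calc (ACO T S e.1 e.2 : ℝ) ≤ (ACO T (S \ NB) e.1 e.2 : ℝ) := h2
          _ ≤ (wt A e.1 * (Fintype.card A:ℝ) ^ m * ∏ f ∈ NB, (1 - wt A f.1)) *
              (ACO T (S \ NB) e.1 e.2 : ℝ) := by nlinarith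
          _ = wt A e.1 * ((∏ f ∈ NB, (1 - wt A f.1)) *
              ((ACO T (S \ NB) e.1 e.2 : ℝ) * (Fintype.card A:ℝ) ^ m)) := by ring
          _ ≤ wt A e.1 * ((∏ f ∈ NB, (1 - wt A f.1)) * (AC T (S \ NB) : ℝ)) := by
              apply mul_le_mul_of_nonneg_left _ hx0
              exact mul_le_mul_of_nonneg_left h3 hprodNB
          _ ≤ wt A e.1 * ((∏ f ∈ S ∩ NB, (1 - wt A f.1)) * (AC T (S \ NB) : ℝ)) := by
              apply mul_le_mul_of_nonneg_left _ hx0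
              exact mul_le_mul_of_nonneg_right h5 hACpos
          _ ≤ wt A e.1 * (AC T S : ℝ) := mul_le_mul_of_nonneg_left h4 hx0
      have hsplit : (AC T S : ℝ) = (AC T (insert e S) : ℝ) + (ACO T S e.1 e.2 : ℝ) := by
        have := AC_split T S e.1 e.2
        rw [Prod.mk.eta] at this
        exact_mod_cast this
      nlinarith
theorem chain_general (T : ℕ) (G : Finset (List A)) (hC : Cond T G) :
    ∀ D S : Finset (List A × ℕ), S ⊆ events T G → D ⊆ S →
      (∏ f ∈ D, (1 - wt A f.1)) * (AC T (S \ D) : ℝ) ≤ (AC T S : ℝ) := by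
  intro D
  induction D using Finset.induction_on with
  | empty => intro S _ _; simp
  | insert f D hfD ihD =>
    intro S hSsub hins
    have hfS : f ∈ S := hins (Finset.mem_insert_self f D)
    have hfev : f ∈ events T G := hSsub hfS
    have hDsub : D ⊆ S := fun a ha => hins (Finset.mem_insert_of_mem ha)
    have hIH := lll_main T G hC (S \ insert f D)
      (fun a ha => hSsub (Finset.mem_sdiff.1 ha).1) f hfev
    have hset : insert f (S \ insert f D) = S \ D := by
      ext a
      simp only [Finset.mem_insert, Finset.mem_sdiff]
      constructor
      · rintro (rfl | ⟨haS, hnot⟩)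
        · exact ⟨hfS, fun hD' => hfD hD'⟩
        · exact ⟨haS, fun hD' => hnot (Or.inr hD')⟩
      · rintro ⟨haS, hnotD⟩
        by_cases haf : a = f
        · exact Or.inl haf
        · exact Or.inr ⟨haS, fun hmem => hmem.elim haf hnotD⟩
    rw [hset] at hIH
    rw [Finset.prod_insert hfD]
    have hprodD : 0 ≤ ∏ g ∈ D, (1 - wt A g.1) :=
      prod_one_sub_wt_nonneg hC (fun a ha => hSsub (hDsub ha))
    calc (1 - wt A f.1) * (∏ g ∈ D, (1 - wt A g.1)) * (AC T (S \ insert f D) : ℝ)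
        = (∏ g ∈ D, (1 - wt A g.1)) * ((1 - wt A f.1) * (AC T (S \ insert f D) : ℝ)) := by
          ring
      _ ≤ (∏ g ∈ D, (1 - wt A g.1)) * (AC T (S \ D) : ℝ) :=
          mul_le_mul_of_nonneg_left hIH hprodD
      _ ≤ (AC T S : ℝ) := ihD S hSsub hDsub


theorem AC_events_pos (T : ℕ) (G : Finset (List A)) (hC : Cond T G) :
    0 < (AC T (events T G) : ℝ) := by
  have h := chain_general T G hC (events T G) (events T G) (le_refl _) (le_refl _)
  rw [Finset.sdiff_self] at h
  rw [AC_empty] at h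
  have hprod : 0 < ∏ f ∈ events T G, (1 - wt A f.1) := by
    apply Finset.prod_pos
    intro f hf
    have := hC.1 f.1 (mem_events.1 hf).1
    linarith
  have hcard : (0:ℝ) < (Fintype.card A : ℝ) ^ T := by
    have : 0 < Fintype.card A := Fintype.card_pos
    positivity
  have : (0:ℝ) < (∏ f ∈ events T G, (1 - wt A f.1)) * ((Fintype.card A : ℝ) ^ T) := by
    positivity
  calc (0:ℝ) < (∏ f ∈ events T G, (1 - wt A f.1)) * ((Fintype.card A : ℝ) ^ T) := this
    _ ≤ (AC T (events T G) : ℝ) := by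
        have : ((Fintype.card A ^ T : ℕ) : ℝ) = (Fintype.card A : ℝ) ^ T := by push_cast; ring
        rw [← this]
        exact h


lemma key_nat : ∀ m : ℕ, 3 ≤ m → 5*(m-1)*2^m ≤ 3^(m+1) := by
  intro m hm
  induction m, hm using Nat.le_induction with
  | base => norm_num
  | succ m hm ih =>
    have e1 : m + 1 - 1 = m := by omega
    rw [e1]
    have h3 : 10*m ≤ 15*(m-1) := by omega
    calc 5*m*2^(m+1) = 10*m*2^m := by ring
      _ ≤ 15*(m-1)*2^m := Nat.mul_le_mul_right _ h3
      _ = 3*(5*(m-1)*2^m) := by ring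
      _ ≤ 3*3^(m+1) := Nat.mul_le_mul_left _ ih
      _ = 3^(m+1+1) := by ring

lemma key_real (m : ℕ) (hm : 1 ≤ m) : ((m:ℝ) - 1) * (2/3)^m ≤ 3/5 := by
  rcases Nat.lt_or_ge m 3 with h | h
  · interval_cases m <;> norm_num
  · have hkey := key_nat m h
    have hcast : ((5*(m-1)*2^m : ℕ) : ℝ) ≤ ((3^(m+1) : ℕ) : ℝ) := Nat.cast_le.2 hkey
    have hsub : ((m - 1 : ℕ) : ℝ) = (m:ℝ) - 1 := by
      have : (1:ℕ) ≤ m := hm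
      push_cast [Nat.cast_sub this]
      ring
    push_cast at hcast
    rw [hsub] at hcast
    have h3 : (0:ℝ) < 3^m := by positivity
    have e2 : ((2:ℝ)/3)^m = 2^m/3^m := div_pow 2 3 m
    rw [e2, ← mul_div_assoc, div_le_iff₀ h3]
    have e3 : (3:ℝ)^(m+1) = 3*3^m := by ring
    nlinarith

lemma exp_neg_two_le {x : ℝ} (h0 : 0 ≤ x) (h2 : x ≤ 1/2) :
    Real.exp (-(2*x)) ≤ 1 - x := by
  have h1 : (1:ℝ) + 2*x ≤ Real.exp (2*x) := by
    have := Real.add_one_le_exp (2*x)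
    linarith
  have hpos : (0:ℝ) < 1 + 2*x := by linarith
  have hexppos : (0:ℝ) < Real.exp (2*x) := Real.exp_pos _
  have h3 : Real.exp (-(2*x)) = 1 / Real.exp (2*x) := by
    rw [Real.exp_neg]; ring
  rw [h3]
  have h4 : 1 / Real.exp (2*x) ≤ 1 / (1 + 2*x) := by
    apply one_div_le_one_div_of_le hpos h1
  have h5 : 1 / (1 + 2*x) ≤ 1 - x := by
    rw [div_le_iff₀ hpos]
    nlinarith
  linarith

lemma rfrac_nonneg (w : List A) : (0:ℝ) ≤ (3/(Fintype.card A:ℝ))^w.length := by positivity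

lemma single_bound {G : Finset (List A)}
    (HGsum : ∑ w ∈ G, (3/(Fintype.card A:ℝ))^w.length ≤ 1/5) :
    ∀ w ∈ G, (3/(Fintype.card A:ℝ))^w.length ≤ 1/5 := by
  intro w hw
  have hterm := Finset.single_le_sum (f := fun w : List A => (3/(Fintype.card A:ℝ))^w.length)
    (fun i _ => rfrac_nonneg i) hw
  linarith

lemma wt_eq (w : List A) :
    wt A w = (2/3:ℝ)^w.length * (3/(Fintype.card A:ℝ))^w.length := by
  unfold wt
  rw [← mul_pow]
  congr 1
  have ha : (Fintype.card A : ℝ) ≠ 0 := by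
    have : 0 < Fintype.card A := Fintype.card_pos
    positivity
  field_simp

lemma wt_le_two_fifteen {G : Finset (List A)}
    (HGne : ∀ w ∈ G, 1 ≤ w.length)
    (HGsum : ∑ w ∈ G, (3/(Fintype.card A:ℝ))^w.length ≤ 1/5) :
    ∀ w ∈ G, wt A w ≤ 2/15 := by
  intro w hw
  have h1 := single_bound HGsum w hw
  have hm := HGne w hw
  have h2 : ((2:ℝ)/3)^w.length ≤ 2/3 := by
    calc ((2:ℝ)/3)^w.length ≤ (2/3:ℝ)^1 :=
        pow_le_pow_of_le_one (by norm_num) (by norm_num) hm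
      _ = 2/3 := pow_one _
  calc wt A w = (2/3:ℝ)^w.length * (3/(Fintype.card A:ℝ))^w.length := wt_eq w
    _ ≤ (2/3) * (1/5) := by
        apply mul_le_mul h2 h1 (rfrac_nonneg w) (by norm_num)
    _ = 2/15 := by norm_num

lemma sum_wt_nbr {G : Finset (List A)}
    (HGne : ∀ w ∈ G, 1 ≤ w.length)
    (HGsum : ∑ w ∈ G, (3/(Fintype.card A:ℝ))^w.length ≤ 1/5)
    (T q k : ℕ) (hk : 1 ≤ k) :
    ∑ f ∈ nbr T G q k, wt A f.1 ≤ (2/15)*k + 3/25 := by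
  classical
  have hsub : nbr T G q k ⊆ (G ×ˢ Finset.range T).filter (fun f => ovl q k f.2 f.1.length) := by
    intro f hf
    unfold nbr events at hf
    simp only [Finset.mem_filter, Finset.mem_product] at hf ⊢
    tauto
  have h1 : ∑ f ∈ nbr T G q k, wt A f.1 ≤
      ∑ f ∈ (G ×ˢ Finset.range T).filter (fun f => ovl q k f.2 f.1.length), wt A f.1 :=
    Finset.sum_le_sum_of_subset_of_nonneg hsub (fun f _ _ => wt_nonneg f.1)
  have h2 : ∑ f ∈ (G ×ˢ Finset.range T).filter (fun f => ovl q k f.2 f.1.length), wt A f.1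
      = ∑ w ∈ G, ((((Finset.range T).filter (fun p' => ovl q k p' w.length)).card : ℝ) * wt A w) := by
    rw [Finset.sum_filter, Finset.sum_product]
    apply Finset.sum_congr rfl
    intro w hw
    rw [← Finset.sum_filter]
    have hfe : (Finset.range T).filter
          (fun a => ovl q k ((w,a) : List A × ℕ).2 ((w,a) : List A × ℕ).1.length)
        = (Finset.range T).filter (fun p' => ovl q k p' w.length) := by
      apply Finset.filter_congr
      intro x _
      exact Iff.rfl
    have hsummand : ∑ a ∈ (Finset.range T).filter (fun p' => ovl q k p' w.length),
        wt A ((w,a) : List A × ℕ).1 = ∑ a ∈ (Finset.range T).filter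
          (fun p' => ovl q k p' w.length), wt A w :=
      Finset.sum_congr rfl (fun a _ => rfl)
    rw [hfe, hsummand, Finset.sum_const, nsmul_eq_mul]
  have h3 : ∀ w ∈ G, (((Finset.range T).filter (fun p' => ovl q k p' w.length)).card)
      ≤ k + (w.length - 1) := by
    intro w hw
    have hsub2 : (Finset.range T).filter (fun p' => ovl q k p' w.length) ⊆
        Finset.Ico (q + 1 - w.length) (q + k) := by
      intro p' hp'
      simp only [Finset.mem_filter, Finset.mem_range] at hp'
      have hov := hp'.2
      unfold ovl at hov
      simp only [Finset.mem_Ico]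
      omega
    calc _ ≤ (Finset.Ico (q + 1 - w.length) (q + k)).card := Finset.card_le_card hsub2
      _ = (q + k) - (q + 1 - w.length) := Nat.card_Ico _ _
      _ ≤ k + (w.length - 1) := by omega
  have h4 : ∀ w ∈ G, ((((Finset.range T).filter (fun p' => ovl q k p' w.length)).card : ℝ) * wt A w)
      ≤ ((2/3)*(k:ℝ) + 3/5) * (3/(Fintype.card A:ℝ))^w.length := by
    intro w hw
    have hm := HGne w hw
    have hb2 : ((w.length:ℝ)-1) * (2/3)^w.length ≤ 3/5 := key_real _ hm
    have hb1 : ((2:ℝ)/3)^w.length ≤ 2/3 := by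
      calc ((2:ℝ)/3)^w.length ≤ (2/3:ℝ)^1 :=
          pow_le_pow_of_le_one (by norm_num) (by norm_num) hm
        _ = 2/3 := pow_one _
    have hcr : ((((Finset.range T).filter (fun p' => ovl q k p' w.length)).card : ℕ) : ℝ)
        ≤ (k:ℝ) + ((w.length:ℝ) - 1) := by
      have hc := (Nat.cast_le (α := ℝ)).2 (h3 w hw)
      rw [Nat.cast_add, Nat.cast_sub hm] at hc
      push_cast at hc ⊢
      linarith
    have hwt0 : 0 ≤ wt A w := wt_nonneg w
    have hfr0 : (0:ℝ) ≤ (3/(Fintype.card A:ℝ))^w.length := rfrac_nonneg w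
    have t1 : wt A w ≤ (2/3) * (3/(Fintype.card A:ℝ))^w.length := by
      rw [wt_eq w]
      exact mul_le_mul_of_nonneg_right hb1 hfr0
    have t2 : ((w.length:ℝ)-1) * wt A w ≤ (3/5) * (3/(Fintype.card A:ℝ))^w.length := by
      rw [wt_eq w]
      calc ((w.length:ℝ)-1) * ((2/3:ℝ)^w.length * (3/(Fintype.card A:ℝ))^w.length)
          = (((w.length:ℝ)-1) * (2/3:ℝ)^w.length) * (3/(Fintype.card A:ℝ))^w.length := by ring
        _ ≤ (3/5) * (3/(Fintype.card A:ℝ))^w.length := mul_le_mul_of_nonneg_right hb2 hfr0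
    have hk0 : (0:ℝ) ≤ (k:ℝ) := Nat.cast_nonneg k
    calc ((((Finset.range T).filter (fun p' => ovl q k p' w.length)).card : ℕ) : ℝ) * wt A w
        ≤ ((k:ℝ) + ((w.length:ℝ) - 1)) * wt A w := mul_le_mul_of_nonneg_right hcr hwt0
      _ = (k:ℝ) * wt A w + ((w.length:ℝ)-1) * wt A w := by ring
      _ ≤ (k:ℝ) * ((2/3) * (3/(Fintype.card A:ℝ))^w.length)
          + (3/5) * (3/(Fintype.card A:ℝ))^w.length := by
          have := mul_le_mul_of_nonneg_left t1 hk0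
          linarith
      _ = ((2/3)*(k:ℝ) + 3/5) * (3/(Fintype.card A:ℝ))^w.length := by ring
  have h5 : ∑ w ∈ G, ((((Finset.range T).filter (fun p' => ovl q k p' w.length)).card : ℝ) * wt A w)
      ≤ ((2/3)*(k:ℝ) + 3/5) * ∑ w ∈ G, (3/(Fintype.card A:ℝ))^w.length := by
    rw [Finset.mul_sum]
    exact Finset.sum_le_sum h4
  have hfac : (0:ℝ) ≤ (2/3)*(k:ℝ) + 3/5 := by
    have : (0:ℝ) ≤ (k:ℝ) := Nat.cast_nonneg k
    linarith
  have h6 : ((2/3)*(k:ℝ) + 3/5) * ∑ w ∈ G, (3/(Fintype.card A:ℝ))^w.length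
      ≤ ((2/3)*(k:ℝ) + 3/5) * (1/5) := mul_le_mul_of_nonneg_left HGsum hfac
  have h7 : ((2/3)*(k:ℝ) + 3/5) * (1/5) = (2/15)*(k:ℝ) + 3/25 := by ring
  linarith [h1, h2 ▸ h1, h5, h6]

lemma prod_nbr_ge {G : Finset (List A)}
    (HGne : ∀ w ∈ G, 1 ≤ w.length)
    (HGsum : ∑ w ∈ G, (3/(Fintype.card A:ℝ))^w.length ≤ 1/5)
    (T q k : ℕ) (hk : 1 ≤ k) :
    Real.exp (-((4/15)*(k:ℝ) + 6/25)) ≤ ∏ f ∈ nbr T G q k, (1 - wt A f.1) := by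
  classical
  have hmemG : ∀ f ∈ nbr T G q k, f.1 ∈ G := by
    intro f hf
    exact (mem_events.1 (nbr_subset_events hf)).1
  have hstep : ∏ f ∈ nbr T G q k, Real.exp (-(2 * wt A f.1)) ≤
      ∏ f ∈ nbr T G q k, (1 - wt A f.1) := by
    apply Finset.prod_le_prod
    · intro f _; exact le_of_lt (Real.exp_pos _)
    · intro f hf
      exact exp_neg_two_le (wt_nonneg f.1) (le_trans (wt_le_two_fifteen HGne HGsum f.1 (hmemG f hf)) (by norm_num))
  have hexp : ∏ f ∈ nbr T G q k, Real.exp (-(2 * wt A f.1)) =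
      Real.exp (∑ f ∈ nbr T G q k, -(2 * wt A f.1)) := by
    rw [Real.exp_sum]
  have hsum := sum_wt_nbr HGne HGsum T q k hk
  have hmono : Real.exp (-((4/15)*(k:ℝ) + 6/25)) ≤
      Real.exp (∑ f ∈ nbr T G q k, -(2 * wt A f.1)) := by
    apply Real.exp_le_exp.2
    have : ∑ f ∈ nbr T G q k, -(2 * wt A f.1) = -(2 * ∑ f ∈ nbr T G q k, wt A f.1) := by
      simp [Finset.mul_sum]
    rw [this]
    have := hsum
    linarith
  rw [hexp] at hstep
  linarith

lemma cond_of {G : Finset (List A)}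
    (HGne : ∀ w ∈ G, 1 ≤ w.length)
    (HGsum : ∑ w ∈ G, (3/(Fintype.card A:ℝ))^w.length ≤ 1/5)
    (T : ℕ) : Cond T G := by
  constructor
  · intro w hw
    exact le_trans (wt_le_two_fifteen HGne HGsum w hw) (by norm_num)
  · intro e he
    have hm : 1 ≤ e.1.length := HGne e.1 (mem_events.1 he).1
    have hprod := prod_nbr_ge HGne HGsum T e.2 e.1.length hm
    have hpow : wt A e.1 * (Fintype.card A:ℝ) ^ e.1.length = 2 ^ e.1.length := by
      unfold wt
      rw [← mul_pow]
      congr 1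
      have ha : (Fintype.card A : ℝ) ≠ 0 := by
        have : 0 < Fintype.card A := Fintype.card_pos
        positivity
      field_simp
    rw [hpow]
    have h2m : Real.exp ((e.1.length:ℝ) * Real.log 2) = 2 ^ e.1.length := by
      rw [← Real.log_pow]
      · rw [Real.exp_log]
        positivity
    have hlin : (4/15)*(e.1.length:ℝ) + 6/25 ≤ (e.1.length:ℝ) * Real.log 2 := by
      have hlog := Real.log_two_gt_d9
      have hm1 : (1:ℝ) ≤ (e.1.length:ℝ) := by exact_mod_cast hm
      nlinarith
    have hgoal : (1:ℝ) ≤ 2 ^ e.1.length * Real.exp (-((4/15)*(e.1.length:ℝ) + 6/25)) := by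
      rw [← h2m, ← Real.exp_add]
      have : (0:ℝ) ≤ (e.1.length:ℝ) * Real.log 2 + -((4/15)*(e.1.length:ℝ) + 6/25) := by
        linarith
      calc (1:ℝ) = Real.exp 0 := (Real.exp_zero).symm
        _ ≤ _ := Real.exp_le_exp.2 this
    have h2mpos : (0:ℝ) ≤ (2:ℝ) ^ e.1.length := by positivity
    calc (1:ℝ) ≤ 2 ^ e.1.length * Real.exp (-((4/15)*(e.1.length:ℝ) + 6/25)) := hgoal
      _ ≤ 2 ^ e.1.length * ∏ f ∈ nbr T G e.2 e.1.length, (1 - wt A f.1) :=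
          mul_le_mul_of_nonneg_left hprod h2mpos

noncomputable def winWord (T q n : ℕ) (hqn : q + n ≤ T) (c : Fin T → A) : List A :=
  List.ofFn (fun i : Fin n => c ⟨q + i.1, by omega⟩)

noncomputable def avoidSet (T : ℕ) (G : Finset (List A)) : Finset (Fin T → A) :=
  Finset.univ.filter (fun c => ∀ e ∈ events T G, ¬ OccF e.1 e.2 c)

lemma AC_events_eq (T : ℕ) (G : Finset (List A)) :
    AC T (events T G) = (avoidSet T G).card := rfl

noncomputable def Mid (T q n : ℕ) (hqn : q + n ≤ T) (G : Finset (List A)) : Finset (List A) :=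
  (avoidSet T G).image (winWord T q n hqn)

lemma winWord_length (T q n : ℕ) (hqn : q + n ≤ T) (c : Fin T → A) :
    (winWord T q n hqn c).length = n := by
  unfold winWord
  simp

lemma winWord_get (T q n : ℕ) (hqn : q + n ≤ T) (c : Fin T → A)
    (i : Fin (winWord T q n hqn c).length) (h : q + i.1 < T) :
    (winWord T q n hqn c).get i = c ⟨q + i.1, h⟩ := by
  rw [List.get_eq_getElem]
  simp [winWord]

lemma occF_winWord (T q n : ℕ) (hqn : q + n ≤ T) (c : Fin T → A) :
    OccF (winWord T q n hqn c) q c := by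
  intro i h
  rw [winWord_get T q n hqn c i h]

theorem mid_card (T q n : ℕ) (hqn : q + n ≤ T) (hn : 1 ≤ n) (G : Finset (List A))
    (HGne : ∀ w ∈ G, 1 ≤ w.length)
    (HGsum : ∑ w ∈ G, (3/(Fintype.card A:ℝ))^w.length ≤ 1/5) :
    (Fintype.card A:ℝ)^n * Real.exp (-((4/15)*(n:ℝ) + 6/25)) ≤
      ((Mid T q n hqn G).card : ℝ) := by
  classical
  have hC := cond_of HGne HGsum T
  have hpos := AC_events_pos T G hC
  set NBJ := nbr T G q n with hNBJ
  have hfiber : ∀ u ∈ Mid T q n hqn G,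
      ((avoidSet T G).filter (fun c => winWord T q n hqn c = u)).card *
        Fintype.card A ^ n ≤ AC T (events T G \ NBJ) := by
    intro u hu
    obtain ⟨c₀, _, rfl⟩ := Finset.mem_image.1 hu
    have hlen : (winWord T q n hqn c₀).length = n := winWord_length T q n hqn c₀
    have hsub : ((avoidSet T G).filter (fun c => winWord T q n hqn c = winWord T q n hqn c₀)) ⊆
        Finset.univ.filter (fun c : Fin T → A =>
          (∀ e ∈ events T G \ NBJ, ¬ OccF e.1 e.2 c) ∧ OccF (winWord T q n hqn c₀) q c) := by
      intro c hc
      rcases Finset.mem_filter.1 hc with ⟨hcav, hcw⟩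
      have hcav' := (Finset.mem_filter.1 hcav).2
      refine Finset.mem_filter.2 ⟨Finset.mem_univ _,
        ⟨fun e he => hcav' e (Finset.mem_sdiff.1 he).1, ?_⟩⟩
      rw [← hcw]
      exact occF_winWord T q n hqn c
    have hcard : ((avoidSet T G).filter (fun c => winWord T q n hqn c = winWord T q n hqn c₀)).card
        ≤ ACO T (events T G \ NBJ) (winWord T q n hqn c₀) q := Finset.card_le_card hsub
    have hd : ∀ f ∈ events T G \ NBJ,
        ¬ ((f.2 < q + (winWord T q n hqn c₀).length) ∧ (q < f.2 + f.1.length)) := by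
      intro f hf hcon
      rcases Finset.mem_sdiff.1 hf with ⟨hfev, hfnot⟩
      apply hfnot
      rw [hNBJ]
      unfold nbr
      refine Finset.mem_filter.2 ⟨hfev, ?_⟩
      unfold ovl
      rw [hlen] at hcon
      exact hcon
    have hindep := indep T (events T G \ NBJ) (winWord T q n hqn c₀) q
      (by rw [hlen]; exact hqn) hd
    rw [hlen] at hindep
    calc ((avoidSet T G).filter (fun c => winWord T q n hqn c = winWord T q n hqn c₀)).card *
          Fintype.card A ^ n
        ≤ ACO T (events T G \ NBJ) (winWord T q n hqn c₀) q * Fintype.card A ^ n :=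
          Nat.mul_le_mul_right _ hcard
      _ ≤ AC T (events T G \ NBJ) := hindep
  have hchain := chain_general T G hC NBJ (events T G) (le_refl _) nbr_subset_events
  have hprodpos : 0 ≤ ∏ f ∈ NBJ, (1 - wt A f.1) :=
    prod_one_sub_wt_nonneg hC nbr_subset_events
  have hpart : AC T (events T G) =
      ∑ u ∈ Mid T q n hqn G, ((avoidSet T G).filter (fun c => winWord T q n hqn c = u)).card := by
    rw [AC_events_eq]
    exact Finset.card_eq_sum_card_image (winWord T q n hqn) (avoidSet T G)
  -- real combination
  have hstep : ∀ u ∈ Mid T q n hqn G,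
      (((avoidSet T G).filter (fun c => winWord T q n hqn c = u)).card : ℝ) *
        ((Fintype.card A:ℝ) ^ n * ∏ f ∈ NBJ, (1 - wt A f.1)) ≤ (AC T (events T G) : ℝ) := by
    intro u hu
    have h1 : (((avoidSet T G).filter (fun c => winWord T q n hqn c = u)).card : ℝ) *
        (Fintype.card A:ℝ) ^ n ≤ (AC T (events T G \ NBJ) : ℝ) := by
      have := hfiber u hu
      exact_mod_cast this
    calc (((avoidSet T G).filter (fun c => winWord T q n hqn c = u)).card : ℝ) *
          ((Fintype.card A:ℝ) ^ n * ∏ f ∈ NBJ, (1 - wt A f.1))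
        = ((((avoidSet T G).filter (fun c => winWord T q n hqn c = u)).card : ℝ) *
            (Fintype.card A:ℝ) ^ n) * ∏ f ∈ NBJ, (1 - wt A f.1) := by ring
      _ ≤ (AC T (events T G \ NBJ) : ℝ) * ∏ f ∈ NBJ, (1 - wt A f.1) :=
          mul_le_mul_of_nonneg_right h1 hprodpos
      _ = (∏ f ∈ NBJ, (1 - wt A f.1)) * (AC T (events T G \ NBJ) : ℝ) := by ring
      _ ≤ (AC T (events T G) : ℝ) := hchain
  have hsumstep : (AC T (events T G) : ℝ) *
      ((Fintype.card A:ℝ) ^ n * ∏ f ∈ NBJ, (1 - wt A f.1)) ≤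
      ((Mid T q n hqn G).card : ℝ) * (AC T (events T G) : ℝ) := by
    have e1 : (AC T (events T G) : ℝ) =
        ∑ u ∈ Mid T q n hqn G,
          (((avoidSet T G).filter (fun c => winWord T q n hqn c = u)).card : ℝ) := by
      rw [hpart]
      push_cast
      rfl
    calc (AC T (events T G) : ℝ) * ((Fintype.card A:ℝ) ^ n * ∏ f ∈ NBJ, (1 - wt A f.1))
        = ∑ u ∈ Mid T q n hqn G,
            ((((avoidSet T G).filter (fun c => winWord T q n hqn c = u)).card : ℝ) *
              ((Fintype.card A:ℝ) ^ n * ∏ f ∈ NBJ, (1 - wt A f.1))) := by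
          rw [e1, Finset.sum_mul]
      _ ≤ ∑ u ∈ Mid T q n hqn G, (AC T (events T G) : ℝ) := Finset.sum_le_sum hstep
      _ = ((Mid T q n hqn G).card : ℝ) * (AC T (events T G) : ℝ) := by
          rw [Finset.sum_const, nsmul_eq_mul]
  have hmain : (Fintype.card A:ℝ) ^ n * ∏ f ∈ NBJ, (1 - wt A f.1) ≤
      ((Mid T q n hqn G).card : ℝ) := by
    have := hsumstep
    rw [mul_comm ((Mid T q n hqn G).card : ℝ) (AC T (events T G) : ℝ)] at this
    exact le_of_mul_le_mul_left this hpos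
  have hexp := prod_nbr_ge HGne HGsum T q n hn
  have hapow : (0:ℝ) ≤ (Fintype.card A:ℝ) ^ n := by positivity
  calc (Fintype.card A:ℝ)^n * Real.exp (-((4/15)*(n:ℝ) + 6/25))
      ≤ (Fintype.card A:ℝ)^n * ∏ f ∈ NBJ, (1 - wt A f.1) :=
        mul_le_mul_of_nonneg_left hexp hapow
    _ ≤ ((Mid T q n hqn G).card : ℝ) := hmain

-- ================= bridge to the two-sided shift =================

lemma fin_app_congr {T : ℕ} (c : Fin T → A) {a b : ℕ} (ha : a < T) (hb : b < T)
    (h : a = b) : c ⟨a, ha⟩ = c ⟨b, hb⟩ := by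
  subst h; rfl

noncomputable def GA (F : Set (List A)) (T : ℕ) : Finset (List A) :=
  Set.Finite.toFinset (s := F ∩ {w : List A | w.length ≤ T})
    ((List.finite_length_le A T).subset (fun w hw => hw.2))

lemma mem_GA {F : Set (List A)} {T : ℕ} {w : List A} :
    w ∈ GA F T ↔ w ∈ F ∧ w.length ≤ T := by
  unfold GA
  rw [Set.Finite.mem_toFinset]
  rfl

lemma GA_ne {F : Set (List A)} (hFne : [] ∉ F) (T : ℕ) :
    ∀ w ∈ GA F T, 1 ≤ w.length := by
  intro w hw
  have hwF := (mem_GA.1 hw).1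
  rcases Nat.eq_zero_or_pos w.length with h0 | h1
  · exfalso
    have : w = [] := List.length_eq_zero_iff.1 h0
    rw [this] at hwF
    exact hFne hwF
  · exact h1

noncomputable def MidN (F : Set (List A)) (n N : ℕ) : Finset (List A) :=
  Mid (2*N + n) N n (by omega) (GA F (2*N + n))

lemma MidN_mono (F : Set (List A)) (hFne : [] ∉ F) (n N : ℕ) :
    MidN F n (N+1) ⊆ MidN F n N := by
  classical
  intro u hu
  obtain ⟨cbig, hcav, hcw⟩ := Finset.mem_image.1 hu
  have hcav' := (Finset.mem_filter.1 hcav).2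
  refine Finset.mem_image.2 ⟨(fun j : Fin (2*N+n) => cbig ⟨j.1 + 1, by omega⟩), ?_, ?_⟩
  · refine Finset.mem_filter.2 ⟨Finset.mem_univ _, ?_⟩
    intro e he hocc
    have hev := mem_events.1 he
    have heG := hev.1
    have hlen1 : 1 ≤ e.1.length := GA_ne hFne (2*N+n) e.1 heG
    have heG' : e.1 ∈ GA F (2*(N+1)+n) := by
      rw [mem_GA] at heG ⊢
      exact ⟨heG.1, by omega⟩
    have he' : (e.1, e.2 + 1) ∈ events (2*(N+1)+n) (GA F (2*(N+1)+n)) := by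
      rw [mem_events]
      refine ⟨heG', ?_, ?_⟩
      · show e.2 + 1 < 2*(N+1)+n
        omega
      · show e.2 + 1 + e.1.length ≤ 2*(N+1)+n
        omega
    refine hcav' (e.1, e.2 + 1) he' ?_
    show OccF e.1 (e.2 + 1) cbig
    intro i h
    have hi : e.2 + i.1 < 2*N+n := by
      have h1 := hev.2.2
      have h2 := i.2
      omega
    have h2 := hocc i hi
    rw [← h2]
    exact fin_app_congr cbig _ _ (by simp only [Fin.val_mk]; omega)
  · rw [← hcw]
    unfold winWord
    congr 1
    funext i
    exact fin_app_congr cbig _ _ (by simp only [Fin.val_mk]; omega)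

lemma MidN_trans (F : Set (List A)) (hFne : [] ∉ F) (n : ℕ) :
    ∀ N M : ℕ, N ≤ M → MidN F n M ⊆ MidN F n N := by
  intro N M hNM
  induction M, hNM using Nat.le_induction with
  | base => exact Finset.Subset.refl _
  | succ M hM ih => exact Finset.Subset.trans (MidN_mono F hFne n M) ih

lemma exists_stable (F : Set (List A)) (hFne : [] ∉ F) (n : ℕ) :
    ∃ N₀ : ℕ, ∀ M, N₀ ≤ M → MidN F n M = MidN F n N₀ := by
  classical
  have hne : (Set.range (fun N => (MidN F n N).card)).Nonempty := ⟨_, ⟨0, rfl⟩⟩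
  obtain ⟨N₀, hN₀⟩ := Nat.sInf_mem hne
  refine ⟨N₀, fun M hM => ?_⟩
  have hsub := MidN_trans F hFne n N₀ M hM
  apply Finset.eq_of_subset_of_card_le hsub
  have hN₀' : (MidN F n N₀).card = sInf (Set.range fun N => (MidN F n N).card) := hN₀
  rw [hN₀']
  exact Nat.sInf_le ⟨M, rfl⟩

lemma list_get_congr {l l' : List A} (h : l = l') (k : ℕ) (hk : k < l.length)
    (hk' : k < l'.length) : l.get ⟨k, hk⟩ = l'.get ⟨k, hk'⟩ := by
  subst h; rfl

noncomputable def ybr (F : Set (List A)) (n N₀ : ℕ) (u : List A)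
    (hexs : ∀ M : ℕ, N₀ ≤ M → { c : Fin (2*M+n) → A //
      c ∈ avoidSet (2*M+n) (GA F (2*M+n)) ∧ winWord (2*M+n) M n (by omega) c = u })
    (M : ℕ) (i : ℤ) : A :=
  if hM : N₀ ≤ M then
    (if h : 0 ≤ i + M ∧ i + M < 2*M + n then (hexs M hM).1 ⟨(i + M).toNat, by omega⟩
     else Classical.arbitrary A)
  else Classical.arbitrary A

lemma ybr_eq (F : Set (List A)) (n N₀ : ℕ) (u : List A)
    (hexs : ∀ M : ℕ, N₀ ≤ M → { c : Fin (2*M+n) → A //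
      c ∈ avoidSet (2*M+n) (GA F (2*M+n)) ∧ winWord (2*M+n) M n (by omega) c = u })
    (M : ℕ) (hM : N₀ ≤ M) (i : ℤ) (h0 : 0 ≤ i + M) (h1 : i + M < 2*M+n)
    (k : ℕ) (hk : k < 2*M + n) (hkey : (k:ℤ) = i + M) :
    ybr F n N₀ u hexs M i = (hexs M hM).1 ⟨k, hk⟩ := by
  unfold ybr
  rw [dif_pos hM, dif_pos (⟨h0, h1⟩ : 0 ≤ i + (M:ℤ) ∧ i + (M:ℤ) < 2*M+n)]
  exact fin_app_congr _ _ _ (by omega)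

lemma mem_lang (F : Set (List A)) (hFne : [] ∉ F) (n : ℕ) (hn : 1 ≤ n) (N₀ : ℕ)
    (hstab : ∀ M, N₀ ≤ M → MidN F n M = MidN F n N₀) :
    ∀ u ∈ MidN F n N₀, u ∈ lang (XAF F) n := by
  classical
  intro u hu
  have hulen : u.length = n := by
    obtain ⟨c, _, rfl⟩ := Finset.mem_image.1 hu
    exact winWord_length _ _ _ _ _
  have hex : ∀ M : ℕ, N₀ ≤ M → ∃ c : Fin (2*M+n) → A,
      c ∈ avoidSet (2*M+n) (GA F (2*M+n)) ∧ winWord (2*M+n) M n (by omega) c = u := by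
    intro M hM
    have : u ∈ MidN F n M := by rw [hstab M hM]; exact hu
    obtain ⟨c, hc1, hc2⟩ := Finset.mem_image.1 this
    exact ⟨c, hc1, hc2⟩
  have hexs : ∀ M : ℕ, N₀ ≤ M → { c : Fin (2*M+n) → A //
      c ∈ avoidSet (2*M+n) (GA F (2*M+n)) ∧ winWord (2*M+n) M n (by omega) c = u } :=
    fun M hM => ⟨(hex M hM).choose, (hex M hM).choose_spec⟩
  set y : ℕ → ℤ → A := ybr F n N₀ u hexs with hy
  obtain ⟨U, hU⟩ := Ultrafilter.exists_le (Filter.atTop : Filter ℕ)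
  have hxe : ∀ i : ℤ, ∃ b : A, {M : ℕ | y M i = b} ∈ U := by
    intro i
    by_contra hcon
    push_neg at hcon
    have hco : ∀ b : A, {M : ℕ | y M i = b}ᶜ ∈ U := fun b =>
      (Ultrafilter.compl_mem_iff_notMem).2 (hcon b)
    have hint : (⋂ b : A, {M : ℕ | y M i = b}ᶜ) ∈ U := Filter.iInter_mem.2 hco
    have hempty : (⋂ b : A, {M : ℕ | y M i = b}ᶜ) = ∅ := by
      ext M
      simp only [Set.mem_iInter, Set.mem_compl_iff, Set.mem_setOf_eq,
        Set.mem_empty_iff_false, iff_false, not_forall, not_not]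
      exact ⟨y M i, rfl⟩
    rw [hempty] at hint
    exact (Filter.empty_notMem (U : Filter ℕ)) hint
  set x : ℤ → A := fun i => (hxe i).choose with hx
  have hxU : ∀ i : ℤ, {M : ℕ | y M i = x i} ∈ U := fun i => (hxe i).choose_spec
  have hagree : ∀ s : Finset ℤ, ∀ M₀ : ℕ,
      ∃ M : ℕ, M₀ ≤ M ∧ N₀ ≤ M ∧ ∀ i ∈ s, y M i = x i := by
    intro s M₀
    have h1 : (⋂ i ∈ s, {M : ℕ | y M i = x i}) ∈ U :=
      (Filter.biInter_finset_mem s).2 (fun i _ => hxU i)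
    have h2 : {M : ℕ | max M₀ N₀ ≤ M} ∈ U := hU (Filter.mem_atTop (max M₀ N₀))
    have h3 := Filter.inter_mem h1 h2
    obtain ⟨M, hM⟩ := Filter.nonempty_of_mem h3
    rcases hM with ⟨hM1, hM2⟩
    simp only [Set.mem_setOf_eq] at hM2
    refine ⟨M, le_trans (le_max_left _ _) hM2, le_trans (le_max_right _ _) hM2, ?_⟩
    intro i hi
    exact Set.mem_iInter₂.1 hM1 i hi
  have hxX : x ∈ XAF F := by
    intro w hw hocc
    obtain ⟨n₀, hn₀⟩ := hocc
    have hwlen : 1 ≤ w.length := by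
      rcases Nat.eq_zero_or_pos w.length with h0 | h1
      · exfalso; exact hFne (by rwa [List.length_eq_zero_iff.1 h0] at hw)
      · exact h1
    obtain ⟨M, hM₀, hMN, hMag⟩ := hagree
      (Finset.image (fun i : Fin w.length => n₀ + (i.1 : ℤ)) Finset.univ)
      (n₀.natAbs + w.length + n + N₀ + 1)
    have hb1 : -(M:ℤ) ≤ n₀ := by omega
    have hb2 : n₀ + w.length ≤ (M:ℤ) + n := by omega
    have hpnat : (0:ℤ) ≤ n₀ + M := by omega
    set p : ℕ := (n₀ + M).toNat with hp
    have hplt : p + w.length ≤ 2*M + n := by omega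
    have hOcc : OccF w p ((hexs M hMN).1) := by
      intro i h
      have hin : (n₀ + (i.1:ℤ)) ∈
          Finset.image (fun i : Fin w.length => n₀ + (i.1 : ℤ)) Finset.univ :=
        Finset.mem_image.2 ⟨i, Finset.mem_univ _, rfl⟩
      have hag := hMag _ hin
      have hyv : y M (n₀ + (i.1:ℤ)) = (hexs M hMN).1 ⟨p + i.1, h⟩ := by
        rw [hy]
        apply ybr_eq F n N₀ u hexs M hMN (n₀ + (i.1:ℤ)) (by omega)
          (by have := i.2; omega) (p + i.1) h (by omega)
      rw [← hyv, hag]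
      exact hn₀ i
    have hevmem : (w, p) ∈ events (2*M+n) (GA F (2*M+n)) := by
      rw [mem_events]
      show w ∈ GA F (2*M+n) ∧ p < 2*M+n ∧ p + w.length ≤ 2*M+n
      refine ⟨mem_GA.2 ⟨hw, by omega⟩, by omega, hplt⟩
    have hav := (Finset.mem_filter.1 (hexs M hMN).2.1).2
    exact hav (w, p) hevmem hOcc
  obtain ⟨M, hM₀, hMN, hMag⟩ := hagree
    (Finset.image (fun i : Fin u.length => ((i.1 : ℤ))) Finset.univ) N₀
  refine ⟨hulen, x, hxX, ⟨0, ?_⟩⟩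
  intro i
  have hi_n : i.1 < n := by rw [← hulen]; exact i.2
  have hin : ((i.1:ℤ)) ∈ Finset.image (fun i : Fin u.length => ((i.1 : ℤ))) Finset.univ :=
    Finset.mem_image.2 ⟨i, Finset.mem_univ _, rfl⟩
  have hag := hMag _ hin
  have hyv : y M ((i.1:ℤ)) = (hexs M hMN).1 ⟨M + i.1, by omega⟩ := by
    rw [hy]
    apply ybr_eq F n N₀ u hexs M hMN ((i.1:ℤ)) (by omega) (by omega) (M + i.1)
      (by omega) (by omega)
  have hj : i.1 < (winWord (2*M+n) M n (by omega) ((hexs M hMN).1)).length := by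
    rw [winWord_length]
    exact hi_n
  have hwg := winWord_get (2*M+n) M n (by omega) ((hexs M hMN).1) ⟨i.1, hj⟩
    (by simp only [Fin.val_mk]; omega)
  have hcw : winWord (2*M+n) M n (by omega) ((hexs M hMN).1) = u := (hexs M hMN).2.2
  calc x ((0:ℤ) + (i.1:ℤ)) = x ((i.1:ℤ)) := by norm_num
    _ = y M ((i.1:ℤ)) := (hag).symm
    _ = (hexs M hMN).1 ⟨M + i.1, by omega⟩ := hyv
    _ = (winWord (2*M+n) M n (by omega) ((hexs M hMN).1)).get ⟨i.1, hj⟩ := by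
        rw [hwg]
    _ = u.get ⟨i.1, i.2⟩ := list_get_congr hcw i.1 hj i.2
    _ = u.get i := rfl

lemma Hpart_of_hsum (F : Set (List A)) (hFne : [] ∉ F)
    (hsum : ∑' k : ℕ, (cardLen F (k + 1) : ENNReal) *
        ENNReal.ofReal ((3 / (Fintype.card A : ℝ)) ^ (k + 1)) < ENNReal.ofReal (1 / 5)) :
    ∀ s : Finset (List A), ↑s ⊆ F →
      ∑ w ∈ s, (3/(Fintype.card A:ℝ))^w.length ≤ 1/5 := by
  classical
  intro s hs
  set M : ℕ := s.sup List.length with hM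
  -- group by length
  have hgroup : ∑ w ∈ s, (3/(Fintype.card A:ℝ))^w.length =
      ∑ m ∈ Finset.range (M+1), ∑ w ∈ s.filter (fun w => w.length = m),
        (3/(Fintype.card A:ℝ))^w.length := by
    rw [Finset.sum_fiberwise_of_maps_to]
    intro w hw
    rw [Finset.mem_range]
    have := Finset.le_sup (f := List.length) hw
    omega
  have hfiber : ∀ m : ℕ, ∑ w ∈ s.filter (fun w => w.length = m),
      (3/(Fintype.card A:ℝ))^w.length
      = ((s.filter (fun w => w.length = m)).card : ℝ) * (3/(Fintype.card A:ℝ))^m := by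
    intro m
    rw [Finset.sum_congr rfl (fun w hw => by
      rw [(Finset.mem_filter.1 hw).2])]
    rw [Finset.sum_const, nsmul_eq_mul]
  have hcardle : ∀ m : ℕ, ((s.filter (fun w => w.length = m)).card : ℝ) ≤
      (cardLen F m : ℝ) := by
    intro m
    have hsubs : ((s.filter (fun w => w.length = m)) : Set (List A)) ⊆
        F ∩ {w : List A | w.length = m} := by
      intro w hw
      simp only [Finset.coe_filter, Set.mem_setOf_eq] at hw
      exact ⟨hs hw.1, hw.2⟩
    have hfin : (F ∩ {w : List A | w.length = m}).Finite :=
      (List.finite_length_eq A m).subset (fun w hw => hw.2)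
    have := Set.ncard_le_ncard hsubs hfin
    rw [Set.ncard_coe_finset] at this
    unfold cardLen
    exact_mod_cast this
  have hcard0 : cardLen F 0 = 0 := by
    unfold cardLen
    have : F ∩ {w : List A | w.length = 0} = ∅ := by
      ext w
      simp only [Set.mem_inter_iff, Set.mem_setOf_eq, Set.mem_empty_iff_false, iff_false]
      rintro ⟨hwF, hw0⟩
      exact hFne (by rwa [List.length_eq_zero_iff.1 hw0] at hwF)
    rw [this, Set.ncard_empty]
  -- ENNReal partial sums
  have hpartial : ∑ k ∈ Finset.range M, ((cardLen F (k+1) : ℝ) *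
      (3/(Fintype.card A:ℝ))^(k+1)) ≤ 1/5 := by
    have hle1 : ∑ k ∈ Finset.range M, (cardLen F (k + 1) : ENNReal) *
        ENNReal.ofReal ((3 / (Fintype.card A : ℝ)) ^ (k + 1)) ≤
        ENNReal.ofReal (1 / 5) :=
      le_of_lt (lt_of_le_of_lt (ENNReal.sum_le_tsum _) hsum)
    have hterm : ∀ k : ℕ, (cardLen F (k + 1) : ENNReal) *
        ENNReal.ofReal ((3 / (Fintype.card A : ℝ)) ^ (k + 1)) =
        ENNReal.ofReal ((cardLen F (k+1) : ℝ) * (3/(Fintype.card A:ℝ))^(k+1)) := by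
      intro k
      rw [ENNReal.ofReal_mul (by positivity)]
      congr 1
      exact (ENNReal.ofReal_natCast _).symm
    rw [Finset.sum_congr rfl (fun k _ => hterm k)] at hle1
    rw [← ENNReal.ofReal_sum_of_nonneg (fun k _ => by positivity)] at hle1
    exact (ENNReal.ofReal_le_ofReal_iff (by norm_num)).1 hle1
  -- assemble
  have hsum2 : ∑ w ∈ s, (3/(Fintype.card A:ℝ))^w.length ≤
      ∑ m ∈ Finset.range (M+1), (cardLen F m : ℝ) * (3/(Fintype.card A:ℝ))^m := by
    rw [hgroup]
    apply Finset.sum_le_sum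
    intro m _
    rw [hfiber m]
    apply mul_le_mul_of_nonneg_right (hcardle m) (by positivity)
  have hsplit : ∑ m ∈ Finset.range (M+1), (cardLen F m : ℝ) * (3/(Fintype.card A:ℝ))^m
      = ∑ k ∈ Finset.range M, (cardLen F (k+1) : ℝ) * (3/(Fintype.card A:ℝ))^(k+1)
        + (cardLen F 0 : ℝ) * (3/(Fintype.card A:ℝ))^0 := Finset.sum_range_succ' _ M
  rw [hsplit, hcard0] at hsum2
  simp only [Nat.cast_zero, zero_mul, add_zero] at hsum2
  linarith

lemma lang_lower (F : Set (List A)) (hFne : [] ∉ F)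
    (Hpart : ∀ s : Finset (List A), ↑s ⊆ F →
      ∑ w ∈ s, (3/(Fintype.card A:ℝ))^w.length ≤ 1/5)
    (n : ℕ) (hn : 1 ≤ n) :
    (Fintype.card A:ℝ)^n * Real.exp (-((4/15)*(n:ℝ) + 6/25)) ≤
      ((lang (XAF F) n).ncard : ℝ) := by
  classical
  obtain ⟨N₀, hstab⟩ := exists_stable F hFne n
  have hGA_ne := GA_ne hFne (2*N₀+n)
  have hGA_sum : ∑ w ∈ GA F (2*N₀+n), (3/(Fintype.card A:ℝ))^w.length ≤ 1/5 :=
    Hpart _ (fun w hw => (mem_GA.1 hw).1)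
  have hmc := mid_card (2*N₀+n) N₀ n (by omega) hn (GA F (2*N₀+n)) hGA_ne hGA_sum
  have hsub : ∀ u ∈ MidN F n N₀, u ∈ lang (XAF F) n := mem_lang F hFne n hn N₀ hstab
  have hfin : (lang (XAF F) n).Finite := by
    apply Set.Finite.subset (List.finite_length_eq A n)
    intro w hw
    exact hw.1
  have h2 : ((MidN F n N₀).card : ℝ) ≤ ((lang (XAF F) n).ncard : ℝ) := by
    have h1 : ((MidN F n N₀ : Finset (List A)) : Set (List A)) ⊆ lang (XAF F) n := by
      intro w hw
      exact hsub w hw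
    have := Set.ncard_le_ncard h1 hfin
    rw [Set.ncard_coe_finset] at this
    exact_mod_cast this
  have hMidN : MidN F n N₀ = Mid (2*N₀+n) N₀ n (by omega) (GA F (2*N₀+n)) := rfl
  calc (Fintype.card A:ℝ)^n * Real.exp (-((4/15)*(n:ℝ) + 6/25))
      ≤ ((Mid (2*N₀+n) N₀ n (by omega) (GA F (2*N₀+n))).card : ℝ) := hmc
    _ = ((MidN F n N₀).card : ℝ) := by rw [hMidN]
    _ ≤ ((lang (XAF F) n).ncard : ℝ) := h2

theorem main_entropy (F : Set (List A)) (hFne : [] ∉ F)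
    (hsum : ∑' k : ℕ, (cardLen F (k + 1) : ENNReal) *
        ENNReal.ofReal ((3 / (Fintype.card A : ℝ)) ^ (k + 1)) < ENNReal.ofReal (1 / 5)) :
    ∀ hX : ℝ, entropyIs (XAF F) hX →
      Real.log (3 * (Fintype.card A : ℝ) / 5) < hX := by
  intro hX hent
  have Hpart := Hpart_of_hsum F hFne hsum
  have ha1 : (1:ℝ) ≤ (Fintype.card A : ℝ) := by
    have : 0 < Fintype.card A := Fintype.card_pos
    exact_mod_cast this
  have hlow : ∀ n : ℕ, 1 ≤ n →
      Real.log (Fintype.card A : ℝ) - 4/15 - (6/25) * (1/(n:ℝ)) ≤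
        Real.log ((lang (XAF F) n).ncard : ℝ) / n := by
    intro n hn
    have hb := lang_lower F hFne Hpart n hn
    have hposb : (0:ℝ) < (Fintype.card A:ℝ)^n * Real.exp (-((4/15)*(n:ℝ) + 6/25)) := by
      positivity
    have hncard_pos : (0:ℝ) < ((lang (XAF F) n).ncard : ℝ) := lt_of_lt_of_le hposb hb
    have hlog : Real.log ((Fintype.card A:ℝ)^n * Real.exp (-((4/15)*(n:ℝ) + 6/25))) ≤
        Real.log ((lang (XAF F) n).ncard : ℝ) := Real.log_le_log hposb hb
    have hlogeq : Real.log ((Fintype.card A:ℝ)^n * Real.exp (-((4/15)*(n:ℝ) + 6/25)))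
        = n * Real.log (Fintype.card A:ℝ) - ((4/15)*(n:ℝ) + 6/25) := by
      rw [Real.log_mul (by positivity) (ne_of_gt (Real.exp_pos _)), Real.log_pow,
        Real.log_exp]
      ring
    have hnpos : (0:ℝ) < (n:ℝ) := by exact_mod_cast hn
    rw [le_div_iff₀ hnpos]
    have expand : (Real.log (Fintype.card A : ℝ) - 4/15 - (6/25) * (1/(n:ℝ))) * n
        = n * Real.log (Fintype.card A:ℝ) - ((4/15)*(n:ℝ) + 6/25) := by
      field_simp
      ring
    rw [expand, ← hlogeq]
    exact hlog
  have hlim2 : Filter.Tendsto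
      (fun n : ℕ => Real.log (Fintype.card A : ℝ) - 4/15 - (6/25) * (1/(n:ℝ)))
      Filter.atTop (nhds (Real.log (Fintype.card A : ℝ) - 4/15)) := by
    have h0 := tendsto_one_div_atTop_nhds_zero_nat (𝕜 := ℝ)
    have h1 : Filter.Tendsto (fun n : ℕ => (6/25 : ℝ) * (1/(n:ℝ))) Filter.atTop (nhds 0) := by
      have := h0.const_mul (6/25 : ℝ)
      simpa using this
    have h2 := (tendsto_const_nhds
      (x := Real.log (Fintype.card A : ℝ) - 4/15) (f := Filter.atTop (α := ℕ))).sub h1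
    simpa using h2
  have hle : Real.log (Fintype.card A : ℝ) - 4/15 ≤ hX := by
    apply le_of_tendsto_of_tendsto hlim2 hent
    filter_upwards [Filter.eventually_ge_atTop 1] with n hn
    exact hlow n hn
  have hnum : Real.log (3 * (Fintype.card A : ℝ) / 5) <
      Real.log (Fintype.card A : ℝ) - 4/15 := by
    have hfrac : Real.log (3 * (Fintype.card A : ℝ) / 5)
        = Real.log (Fintype.card A : ℝ) - Real.log (5/3) := by
      rw [show (3 * (Fintype.card A : ℝ) / 5) = (Fintype.card A : ℝ) / (5/3) by ring]
      rw [Real.log_div (by positivity) (by norm_num)]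
    have hl2 := Real.log_two_gt_d9
    have h52 : Real.log 2 ≤ Real.log (((5:ℝ)/3)^2) := by
      apply Real.log_le_log (by norm_num)
      norm_num
    rw [Real.log_pow] at h52
    push_cast at h52
    rw [hfrac]
    linarith
  linarith

end SF14

/-- explicit entropy lower bound `h(X) > log(3|A|/5)`. -/
theorem entropy_gt_of_small_forbidden_list
    {A : Type} [Fintype A] [Nonempty A]
    (F : Set (List A)) (hFne : [] ∉ F)
    (hsum : ∑' n : ℕ, (cardLen F (n + 1) : ℝ≥0∞) *
        ENNReal.ofReal ((3 / (Fintype.card A : ℝ)) ^ (n + 1)) < ENNReal.ofReal (1 / 5)) :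
    ∀ hX : ℝ, entropyIs (XAF F) hX →
      Real.log (3 * (Fintype.card A : ℝ) / 5) < hX :=
  SF14.main_entropy F hFne hsum

end SlowForbidden
end
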